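/- Let k ≥ 1 and let τ be a relational signature of maximal arity k. Then there is a function f : ℕ → ℕ and an n_0 ∈ ℕ such that for every finite set A with |A| > n_0 both of the following hold: (S1) for every τ-structure S with domain A and every linear order < on A, there is a subset A' ⊆ A with |A'| ≥ f(|A|) such that all <-increasing k-tuples over A' have the same atomic type in S; and (S2) the set of (k+1)-element subsets of A can be partitioned into two sets B and B' such that every subset A' ⊆ A with |A'| ≥ f(|A|) contains both a (k+1)-subset in B and a (k+1)-subset in B'. -/

import Mathlib

namespace RD


lemma sq_le_two_pow : ∀ s, 6 ≤ s → (s+1)^2 ≤ 2^s := by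
  intro s hs
  induction s with
  | zero => omega
  | succ n ih =>
    rcases Nat.lt_or_ge n 6 with h | h
    · interval_cases n <;> first | omega | norm_num
    · have h1 := ih h
      have : (n+2)^2 ≤ 2*(n+1)^2 := by nlinarith
      calc (n+1+1)^2 ≤ 2*(n+1)^2 := this
        _ ≤ 2*2^n := by omega
        _ = 2^(n+1) := by ring

lemma log_le_sqrt {x : ℕ} (hx : 36 ≤ x) : Nat.log 2 x ≤ Nat.sqrt x := by
  have hs : 6 ≤ Nat.sqrt x := by
    have := Nat.sqrt_le_sqrt hx
    simpa [Nat.sqrt_eq'] using this.trans_eq' (by norm_num [Nat.sqrt] )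
  by_contra h
  push_neg at h
  have h1 : 2 ^ (Nat.sqrt x + 1) ≤ 2 ^ Nat.log 2 x := Nat.pow_le_pow_right (by norm_num) h
  have h2 : 2 ^ Nat.log 2 x ≤ x := Nat.pow_log_le_self 2 (by omega)
  have h3 : x < (Nat.sqrt x + 1)^2 := by
    have := Nat.lt_succ_sqrt x
    nlinarith [Nat.lt_succ_sqrt x]
  have h4 := sq_le_two_pow (Nat.sqrt x) hs
  have : 2 ^ (Nat.sqrt x) < 2 ^ (Nat.sqrt x + 1) := by
    exact Nat.pow_lt_pow_right (by norm_num) (by omega)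
  omega

lemma sqrt_lin {a b x : ℕ} (h : (a+b+1)^2 ≤ x) : a * Nat.sqrt x + b ≤ x := by
  have hs : a + b + 1 ≤ Nat.sqrt x := by
    have := Nat.sqrt_le_sqrt h
    rwa [show (a+b+1)^2 = (a+b+1)*(a+b+1) by ring, Nat.sqrt_eq] at this
  have h2 : Nat.sqrt x * Nat.sqrt x ≤ x := Nat.sqrt_le x
  nlinarith

/-- Exponential dominates polynomials. -/
lemma poly_le_two_pow (A c : ℕ) : ∃ x₀, ∀ x, x₀ ≤ x → A * x ^ c ≤ 2 ^ x := by
  refine ⟨max 36 ((c + (A + c) + 1)^2), fun x hx => ?_⟩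
  have hx36 : 36 ≤ x := le_trans (le_max_left _ _) hx
  have hxc : (c + (A + c) + 1)^2 ≤ x := le_trans (le_max_right _ _) hx
  have hxpos : x ≠ 0 := by omega
  have h1 : x ≤ 2 ^ (Nat.log 2 x + 1) := by
    have := Nat.lt_pow_succ_log_self (b := 2) (by norm_num) x
    omega
  have h2 : x ^ c ≤ 2 ^ ((Nat.log 2 x + 1) * c) := by
    calc x ^ c ≤ (2 ^ (Nat.log 2 x + 1)) ^ c := Nat.pow_le_pow_left h1 c
      _ = 2 ^ ((Nat.log 2 x + 1) * c) := by rw [← pow_mul]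
  have hA : A ≤ 2 ^ A := (Nat.lt_two_pow_self (n := A)).le
  have key : A + (Nat.log 2 x + 1) * c ≤ x := by
    have hl : Nat.log 2 x ≤ Nat.sqrt x := log_le_sqrt hx36
    have h3 : c * Nat.sqrt x + (A + c) ≤ x := sqrt_lin hxc
    nlinarith
  calc A * x ^ c ≤ 2 ^ A * 2 ^ ((Nat.log 2 x + 1) * c) := Nat.mul_le_mul hA h2
    _ = 2 ^ (A + (Nat.log 2 x + 1) * c) := by rw [← pow_add]
    _ ≤ 2 ^ x := Nat.pow_le_pow_right (by norm_num) key

lemma polylog (a b c : ℕ) : ∃ n₀, ∀ n, n₀ ≤ n → a * (Nat.log 2 n + b) ^ c ≤ n := by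
  obtain ⟨x₀, hx₀⟩ := poly_le_two_pow (a * 2^c) c
  refine ⟨2 ^ (max b x₀ + 1), fun n hn => ?_⟩
  have hn1 : 1 ≤ n := le_trans Nat.one_le_two_pow hn
  set x := Nat.log 2 n with hxdef
  have hxge : max b x₀ + 1 ≤ x := by
    have := Nat.log_mono_right (b := 2) hn
    rwa [Nat.log_pow (by norm_num)] at this
  have h1 : (x + b) ^ c ≤ (2*x)^c := by
    apply Nat.pow_le_pow_left
    have : b ≤ x := by omega
    omega
  have h2 : a * (x+b)^c ≤ (a * 2^c) * x^c := by
    calc a * (x+b)^c ≤ a * (2*x)^c := Nat.mul_le_mul_left _ h1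
      _ = (a * 2^c) * x^c := by rw [mul_pow]; ring
  have h3 : (a * 2^c) * x^c ≤ 2 ^ x := hx₀ _ (by omega)
  have h4 : 2 ^ x ≤ n := Nat.pow_log_le_self 2 (by omega)
  omega



open Finset

variable {α : Type*} {C : Type*}

/-- `A` is monochromatic for the coloring `χ` of `u`-element subsets. -/
def MonoOn (u : ℕ) (χ : Finset α → C) (A : Finset α) : Prop :=
  ∀ s t : Finset α, s ⊆ A → t ⊆ A → s.card = u → t.card = u → χ s = χ t

lemma monoOn_subset {u : ℕ} {χ : Finset α → C} {A B : Finset α} (h : MonoOn u χ A)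
    (hBA : B ⊆ A) : MonoOn u χ B := fun s t hs ht => h s t (hs.trans hBA) (ht.trans hBA)

lemma choose_le_pow' (n k : ℕ) : n.choose k ≤ n ^ k :=
  (Nat.choose_le_descFactorial n k).trans (Nat.descFactorial_le_pow n k)

lemma choose_le_two_pow' (m u : ℕ) (h : u ≤ m) : m.choose u ≤ 2 ^ m := by
  have h1 : m.choose u ≤ ∑ i ∈ Finset.range (m+1), m.choose i := by
    apply Finset.single_le_sum (f := fun i => m.choose i) (fun i _ => Nat.zero_le _)
    simp [Nat.lt_succ_iff, h]
  simpa [Nat.sum_range_choose] using h1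

/-- Counting (probabilistic) lower bound. -/
lemma counting (u m N : ℕ) (hum : u ≤ m)
    (hnum : 2 * N ^ m < 2 ^ (m.choose u)) :
    ∃ χ : Finset (Fin N) → Bool, ∀ A : Finset (Fin N), MonoOn u χ A → A.card < m := by
  classical
  rcases Nat.lt_or_ge N m with hNm | hNm
  · refine ⟨fun _ => false, fun A _ => lt_of_le_of_lt ?_ hNm⟩
    simpa using A.card_le_univ
  suffices h : ∃ χ : Finset (Fin N) → Bool, ∀ A : Finset (Fin N), A.card = m → ¬ MonoOn u χ A by
    obtain ⟨χ, hχ⟩ := h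
    refine ⟨χ, fun A hA => ?_⟩
    by_contra hge
    push_neg at hge
    obtain ⟨A', hA'sub, hA'card⟩ := Finset.exists_subset_card_eq hge
    exact hχ A' hA'card (monoOn_subset hA hA'sub)
  by_contra hcon
  push_neg at hcon
  set K : ℕ := 2 ^ N with hK
  set Cc : ℕ := m.choose u with hCc
  set Bad : Finset (Finset (Fin N) → Bool) :=
    Finset.univ.filter (fun χ => ∃ A ∈ Finset.powersetCard m (Finset.univ : Finset (Fin N)),
      MonoOn u χ A) with hBadDef
  have hΩBad : (Finset.univ : Finset (Finset (Fin N) → Bool)) ⊆ Bad := by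
    intro χ _
    rw [hBadDef, Finset.mem_filter]
    obtain ⟨A, hAm, hmono⟩ := hcon χ
    exact ⟨Finset.mem_univ _, A, by simp [Finset.mem_powersetCard, hAm], hmono⟩
  have hΩcard : (Finset.univ : Finset (Finset (Fin N) → Bool)).card = 2 ^ K := by
    simp [hK, Finset.card_univ]
  -- per-A bound
  have perA : ∀ A ∈ Finset.powersetCard m (Finset.univ : Finset (Fin N)),
      (Finset.univ.filter (fun χ : Finset (Fin N) → Bool => MonoOn u χ A)).card
        ≤ 2 * 2 ^ (K - Cc) := by
    intro A hAmem
    have hAcard : A.card = m := (Finset.mem_powersetCard.mp hAmem).2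
    have hTne : (Finset.powersetCard u A).Nonempty := by
      rw [Finset.powersetCard_nonempty]; omega
    obtain ⟨s₀, hs₀⟩ := hTne
    have hs₀A : s₀ ⊆ A ∧ s₀.card = u := Finset.mem_powersetCard.mp hs₀
    set tgt : Finset (Bool × (Finset (Fin N) → Bool)) :=
      (Finset.univ : Finset Bool) ×ˢ Fintype.piFinset (fun s : Finset (Fin N) =>
        if s ∈ Finset.powersetCard u A then ({false} : Finset Bool) else Finset.univ)
      with htgt
    have hmap : ∀ χ ∈ Finset.univ.filter (fun χ : Finset (Fin N) → Bool => MonoOn u χ A),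
        (χ s₀, fun s => if s ∈ Finset.powersetCard u A then false else χ s) ∈ tgt := by
      intro χ _
      rw [htgt, Finset.mem_product]
      constructor
      · exact Finset.mem_univ _
      · rw [Fintype.mem_piFinset]
        intro s
        by_cases hs : s ∈ Finset.powersetCard u A <;> simp [hs]
    have hinj : Set.InjOn (fun χ : Finset (Fin N) → Bool =>
        (χ s₀, fun s => if s ∈ Finset.powersetCard u A then false else χ s))
        (Finset.univ.filter (fun χ : Finset (Fin N) → Bool => MonoOn u χ A)) := by
      intro χ hχ χ' hχ' heq
      have hχm : MonoOn u χ A := (Finset.mem_filter.mp hχ).2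
      have hχ'm : MonoOn u χ' A := (Finset.mem_filter.mp hχ').2
      have h1 : χ s₀ = χ' s₀ := congrArg Prod.fst heq
      have h2 := congrArg Prod.snd heq
      funext s
      by_cases hs : s ∈ Finset.powersetCard u A
      · obtain ⟨hsA, hsu⟩ := Finset.mem_powersetCard.mp hs
        calc χ s = χ s₀ := hχm s s₀ hsA hs₀A.1 hsu hs₀A.2
          _ = χ' s₀ := h1
          _ = χ' s := hχ'm s₀ s hs₀A.1 hsA hs₀A.2 hsu
      · have := congrFun h2 s
        simpa [hs] using this
    have hcard1 : (Finset.univ.filter (fun χ : Finset (Fin N) → Bool => MonoOn u χ A)).card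
        ≤ tgt.card := Finset.card_le_card_of_injOn _ hmap hinj
    have htgtcard : tgt.card = 2 * 2 ^ (K - Cc) := by
      rw [htgt, Finset.card_product, Fintype.card_piFinset]
      have hcards : ∀ s : Finset (Fin N),
          (if s ∈ Finset.powersetCard u A then ({false} : Finset Bool) else Finset.univ).card
            = if s ∈ Finset.powersetCard u A then 1 else 2 := by
        intro s; by_cases hs : s ∈ Finset.powersetCard u A <;> simp [hs]
      simp only [hcards]
      have hfT : Finset.univ.filter (fun s : Finset (Fin N) => s ∈ Finset.powersetCard u A)
          = Finset.powersetCard u A := by ext s; simp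
      have hTcard : (Finset.powersetCard u A).card = Cc := by
        rw [Finset.card_powersetCard, hAcard]
      rw [Finset.prod_ite]
      simp only [Finset.prod_const_one, Finset.prod_const, one_mul]
      have hcardnot : (Finset.univ.filter
          (fun s : Finset (Fin N) => ¬ s ∈ Finset.powersetCard u A)).card = K - Cc := by
        rw [Finset.filter_not, Finset.card_sdiff_of_subset (Finset.filter_subset _ _), hfT, hTcard]
        congr 1
        rw [Finset.card_univ, hK]
        simp
      rw [hcardnot]
      simp
    omega
  have hBadle : Bad.card ≤ N.choose m * (2 * 2 ^ (K - Cc)) := by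
    have hsub : Bad ⊆ (Finset.powersetCard m (Finset.univ : Finset (Fin N))).biUnion
        (fun A => Finset.univ.filter (fun χ : Finset (Fin N) → Bool => MonoOn u χ A)) := by
      intro χ hχ
      rw [hBadDef, Finset.mem_filter] at hχ
      obtain ⟨-, A, hAm, hmono⟩ := hχ
      exact Finset.mem_biUnion.mpr ⟨A, hAm, Finset.mem_filter.mpr ⟨Finset.mem_univ _, hmono⟩⟩
    calc Bad.card ≤ _ := Finset.card_le_card hsub
      _ ≤ ∑ A ∈ Finset.powersetCard m (Finset.univ : Finset (Fin N)),
            (Finset.univ.filter (fun χ : Finset (Fin N) → Bool => MonoOn u χ A)).card :=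
        Finset.card_biUnion_le
      _ ≤ ∑ _A ∈ Finset.powersetCard m (Finset.univ : Finset (Fin N)), 2 * 2 ^ (K - Cc) :=
        Finset.sum_le_sum perA
      _ = N.choose m * (2 * 2 ^ (K - Cc)) := by
        rw [Finset.sum_const, smul_eq_mul, Finset.card_powersetCard, Finset.card_univ,
          Fintype.card_fin]
  -- numeric contradiction
  have hCK : Cc ≤ K := by
    rw [hCc, hK]
    exact (choose_le_two_pow' m u hum).trans (Nat.pow_le_pow_right (by norm_num) hNm)
  have hfinal : N.choose m * (2 * 2 ^ (K - Cc)) < 2 ^ K := by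
    have h1 : N.choose m * 2 < 2 ^ Cc := by
      have := choose_le_pow' N m
      omega
    calc N.choose m * (2 * 2 ^ (K - Cc)) = (N.choose m * 2) * 2 ^ (K - Cc) := by ring
      _ < 2 ^ Cc * 2 ^ (K - Cc) := by
          apply Nat.mul_lt_mul_of_lt_of_le h1 le_rfl
          positivity
      _ = 2 ^ K := by rw [← pow_add]; congr 1; omega
  have := (Finset.card_le_card hΩBad).trans hBadle
  omega



/-- Highest differing bit of two naturals. -/
def dlt (a b : ℕ) : ℕ := Nat.log 2 (a ^^^ b)

lemma dlt_comm (a b : ℕ) : dlt a b = dlt b a := by rw [dlt, dlt, Nat.xor_comm]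

lemma testBit_log2_self {x : ℕ} (hx : x ≠ 0) : x.testBit (Nat.log 2 x) = true := by
  set l := Nat.log 2 x with hl
  have h1 : 2 ^ l ≤ x := Nat.pow_log_le_self 2 hx
  have h2 : x < 2 ^ (l + 1) := Nat.lt_pow_succ_log_self (by norm_num) x
  rw [Nat.testBit_eq_decide_div_mod_eq]
  have h2' : x < 2 ^ l * 2 := by rw [← pow_succ]; exact h2
  have hdiv : x / 2 ^ l = 1 := by
    apply Nat.div_eq_of_lt_le (by simpa using h1)
    rw [Nat.succ_mul, one_mul]; omega
  simp [hdiv]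

lemma testBit_dlt_ne {a b : ℕ} (hab : a ≠ b) :
    a.testBit (dlt a b) ≠ b.testBit (dlt a b) := by
  have hx : a ^^^ b ≠ 0 := by
    simp [xor_eq_zero_iff]; exact hab
  have hbit := testBit_log2_self hx
  rw [Nat.testBit_xor] at hbit
  intro hEq
  simp only [dlt] at hEq
  rw [hEq] at hbit
  simp at hbit

lemma testBit_eq_of_gt_dlt {a b : ℕ} {j : ℕ} (hj : dlt a b < j) :
    a.testBit j = b.testBit j := by
  rcases eq_or_ne a b with rfl | hab
  · rfl
  have hx : a ^^^ b ≠ 0 := by simp [xor_eq_zero_iff]; exact hab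
  have hxlt : a ^^^ b < 2 ^ j :=
    (Nat.log_lt_iff_lt_pow (by norm_num) hx).mp hj
  have := Nat.testBit_lt_two_pow hxlt
  rw [Nat.testBit_xor] at this
  rcases Bool.eq_false_or_eq_true (a.testBit j) with h | h <;>
    rcases Bool.eq_false_or_eq_true (b.testBit j) with h' | h' <;>
      simp [h, h'] at this ⊢

lemma dlt_eq_of_bits {a b j : ℕ} (hne : a.testBit j ≠ b.testBit j)
    (habove : ∀ t, j < t → a.testBit t = b.testBit t) : dlt a b = j := by
  have hab : a ≠ b := fun h => hne (by rw [h])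
  rcases lt_trichotomy (dlt a b) j with h | h | h
  · exact absurd (testBit_eq_of_gt_dlt h) hne
  · exact h
  · exact absurd (habove _ h) (testBit_dlt_ne hab)

lemma dlt_bits_of_lt {a b : ℕ} (hab : a < b) :
    a.testBit (dlt a b) = false ∧ b.testBit (dlt a b) = true := by
  have hne := testBit_dlt_ne hab.ne
  rcases Bool.eq_false_or_eq_true (a.testBit (dlt a b)) with h | h <;>
    rcases Bool.eq_false_or_eq_true (b.testBit (dlt a b)) with h' | h'
  · simp [h, h'] at hne
  · exfalso
    have hba : b < a := Nat.lt_of_testBit (dlt a b) h' h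
      (fun j hj => (testBit_eq_of_gt_dlt hj).symm)
    omega
  · exact ⟨h, h'⟩
  · simp [h, h'] at hne

lemma dlt_ne_of_chain {a b c : ℕ} (h1 : a < b) (h2 : b < c) : dlt a b ≠ dlt b c := by
  intro h
  have ha := dlt_bits_of_lt h1
  have hb := dlt_bits_of_lt h2
  rw [h] at ha
  rw [ha.2] at hb
  simp at hb

lemma dlt_trans_max {a b c : ℕ} (h1 : a < b) (h2 : b < c) :
    dlt a c = max (dlt a b) (dlt b c) := by
  have hab := dlt_bits_of_lt h1
  have hbc := dlt_bits_of_lt h2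
  have hne := dlt_ne_of_chain h1 h2
  rcases Nat.lt_or_ge (dlt a b) (dlt b c) with h | h
  · rw [max_eq_right h.le]
    apply dlt_eq_of_bits
    · rw [testBit_eq_of_gt_dlt h, hbc.1, hbc.2]; simp
    · intro t ht
      rw [testBit_eq_of_gt_dlt (lt_trans h ht), testBit_eq_of_gt_dlt ht]
  · have h' : dlt b c < dlt a b := lt_of_le_of_ne h (Ne.symm hne)
    rw [max_eq_left h]
    apply dlt_eq_of_bits
    · rw [hab.1, ← testBit_eq_of_gt_dlt h', hab.2]; simp
    · intro t ht
      rw [testBit_eq_of_gt_dlt ht, testBit_eq_of_gt_dlt (lt_trans h' ht)]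

lemma dlt_lt_of_lt_pow {a b n : ℕ} (ha : a < 2 ^ n) (hb : b < 2 ^ n) (hab : a ≠ b) :
    dlt a b < n := by
  have hx : a ^^^ b ≠ 0 := by simp [xor_eq_zero_iff]; exact hab
  have hxlt : a ^^^ b < 2 ^ n := Nat.xor_lt_two_pow ha hb
  exact (Nat.log_lt_iff_lt_pow (by norm_num) hx).mpr hxlt



/-- Core sequence analysis for the stepping-up argument: if descents propagate
through windows of length `j`, consecutive values are distinct, and monotone
runs are bounded by `t'`, then the sequence is short. -/
lemma seq_core (δ : ℕ → ℕ) (m j t' : ℕ) (hj : 3 ≤ j)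
    (Hne : ∀ s, s + 3 ≤ m → δ s ≠ δ (s+1))
    (W : ∀ i, i + j + 1 ≤ m → δ (i+1) < δ i →
      ∀ s, i ≤ s → s + 2 ≤ i + j → δ (s+1) < δ s)
    (Rinc : ∀ p q, q ≤ m - 2 → p ≤ q →
      (∀ s, p ≤ s → s < q → δ s < δ (s+1)) → q - p + 1 ≤ t')
    (Rdec : ∀ p q, q ≤ m - 2 → p ≤ q →
      (∀ s, p ≤ s → s < q → δ (s+1) < δ s) → q - p + 1 ≤ t') :
    m ≤ 2 * t' + j + 2 := by
  classical
  rcases Nat.lt_or_ge m (j+2) with hm | hm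
  · omega
  -- `m ≥ j + 2 ≥ 5`.
  by_cases hex : ∃ s, s ≤ m - 3 ∧ δ (s+1) < δ s
  · set p := Nat.find hex with hp
    obtain ⟨hpm, hpd⟩ := Nat.find_spec hex
    have hpleast : ∀ s, s < p → ¬ (s ≤ m - 3 ∧ δ (s+1) < δ s) := fun s hs => Nat.find_min hex hs
    have hasc : ∀ s, s < p → δ s < δ (s+1) := by
      intro s hs
      have h1 : ¬ (s ≤ m - 3 ∧ δ (s+1) < δ s) := hpleast s hs
      have h2 : s ≤ m - 3 := by omega
      have h3 : ¬ δ (s+1) < δ s := fun hc => h1 ⟨h2, hc⟩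
      have h4 : δ s ≠ δ (s+1) := Hne s (by omega)
      omega
    have hpre : p + 1 ≤ t' := by
      have := Rinc 0 p (by omega) (by omega) (fun s _ hs => hasc s hs)
      omega
    rcases Nat.lt_or_ge m (p + j + 1) with hcase | hcase
    · omega
    · -- descents propagate to the end
      have hdesc : ∀ s, p ≤ s → s ≤ m - 3 → δ (s+1) < δ s := by
        intro s
        induction s using Nat.strong_induction_on with
        | _ s ih =>
          intro hps hsm
          rcases eq_or_lt_of_le hps with rfl | hlt
          · exact hpd
          · set i₀ := min (s-1) (m-j-1) with hi₀
            have hi₀p : p ≤ i₀ := by omega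
            have hi₀d : δ (i₀+1) < δ i₀ := ih i₀ (by omega) hi₀p (by omega)
            exact W i₀ (by omega) hi₀d s (by omega) (by omega)
      have hsuf : (m-2) - p + 1 ≤ t' := Rdec p (m-2) (by omega) (by omega)
        (fun s hs hsm => hdesc s hs (by omega))
      omega
  · push_neg at hex
    have hasc : ∀ s, s < m - 2 → δ s < δ (s+1) := by
      intro s hs
      have h3 : δ s ≤ δ (s+1) := hex s (by omega)
      have h4 : δ s ≠ δ (s+1) := Hne s (by omega)
      omega
    have := Rinc 0 (m-2) (by omega) (by omega) (fun s _ hs => hasc s hs)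
    omega



section StepDef

variable {n N : ℕ}

open Classical in
/-- The monotone-pattern condition on the first `j` values of `D`. -/
def MonoPat (j : ℕ) (D : ℕ → ℕ) : Prop :=
  (∀ t, t < j → ∀ s, s < t → D s < D t) ∨ (∀ t, t < j → ∀ s, s < t → D t < D s)

open Classical in
/-- Core of the stepping-up coloring. -/
noncomputable def stepCore (j n : ℕ) (hn : 0 < n) (χ : Finset (Fin n) → Bool)
    (D : ℕ → ℕ) : Bool :=
  if MonoPat j D then
    χ ((Finset.range j).image fun t => (⟨D t % n, Nat.mod_lt _ hn⟩ : Fin n))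
  else decide (D 0 < D 1)

/-- The stepping-up coloring of `(j+1)`-subsets of `Fin N` obtained from a
coloring `χ` of `j`-subsets of `Fin n`. -/
noncomputable def stepColor (j : ℕ) (hn : 0 < n) (χ : Finset (Fin n) → Bool)
    (e : Finset (Fin N)) : Bool :=
  if h : e.card = j + 1 then
    stepCore j n hn χ (fun t =>
      dlt ((e.orderEmbOfFin h) ⟨min t j, by omega⟩).val
          ((e.orderEmbOfFin h) ⟨min (t+1) j, by omega⟩).val)
  else false

lemma card_image_range {β : Type*} [DecidableEq β] [Preorder β] {g : ℕ → β} {c : ℕ}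
    (hg : ∀ s t, s < t → t < c → g s < g t) :
    ((Finset.range c).image g).card = c := by
  rw [Finset.card_image_of_injOn, Finset.card_range]
  intro x hx y hy hxy
  simp only [Finset.coe_range, Set.mem_Iio] at hx hy
  rcases lt_trichotomy x y with h | h | h
  · exact absurd hxy (ne_of_lt (hg x y h hy))
  · exact h
  · exact absurd hxy.symm (ne_of_lt (hg y x h hx))

lemma orderEmbOfFin_image_range {g : ℕ → Fin N} {c : ℕ}
    (hg : ∀ s t, s < t → t < c → g s < g t)
    (he : ((Finset.range c).image g).card = c) :
    ⇑(((Finset.range c).image g).orderEmbOfFin he) = fun t : Fin c => g t.val := by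
  symm
  apply Finset.orderEmbOfFin_unique he
  · intro x
    exact Finset.mem_image.mpr ⟨x.val, Finset.mem_range.mpr x.isLt, rfl⟩
  · intro x y hxy
    exact hg x.val y.val hxy y.isLt

/-- Evaluation of `stepColor` on the image of an increasing tuple. -/
lemma stepColor_eval {j : ℕ} (hn : 0 < n) (χ : Finset (Fin n) → Bool)
    {g : ℕ → Fin N} (hg : ∀ s t, s < t → t < j + 1 → g s < g t) :
    stepColor j hn χ ((Finset.range (j+1)).image g)
      = stepCore j n hn χ (fun t => dlt (g (min t j)).val (g (min (t+1) j)).val) := by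
  have he : ((Finset.range (j+1)).image g).card = j + 1 := card_image_range hg
  have hemb := orderEmbOfFin_image_range hg he
  rw [stepColor, dif_pos he]
  congr 1
  funext t
  rw [show (((Finset.range (j+1)).image g).orderEmbOfFin he) ⟨min t j, by omega⟩
        = g (min t j) from by rw [hemb],
      show (((Finset.range (j+1)).image g).orderEmbOfFin he) ⟨min (t+1) j, by omega⟩
        = g (min (t+1) j) from by rw [hemb]]

end StepDef


section StepUp

variable {n N : ℕ}

lemma step_up {j : ℕ} (hj : 3 ≤ j) (hn : 0 < n) (hNn : N ≤ 2 ^ n)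
    (χ : Finset (Fin n) → Bool) (ℓ : ℕ)
    (hχ : ∀ V : Finset (Fin n), MonoOn j χ V → V.card < ℓ)
    (A : Finset (Fin N)) (hA : MonoOn (j+1) (stepColor j hn χ) A) :
    A.card < 2 * ℓ + 3 * j + 6 := by
  classical
  by_contra hbig
  push_neg at hbig
  set m := A.card with hm
  have hl1 : 1 ≤ ℓ := by
    have := hχ ∅ (by
      intro s t hs ht hcs hct
      exfalso
      rw [Finset.subset_empty] at hs
      subst hs
      simp at hcs
      omega)
    omega
  have hm2 : j + 6 ≤ m := by omega
  set M := m - 1 with hM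
  set a := A.orderEmbOfFin hm.symm with ha
  set av : ℕ → Fin N := fun i => a ⟨min i M, by omega⟩ with hav_def
  have havmem : ∀ i, av i ∈ A := fun i => Finset.orderEmbOfFin_mem A hm.symm _
  have hav : ∀ s t, s < t → t ≤ M → av s < av t := by
    intro s t hst htM
    apply a.strictMono
    rw [Fin.mk_lt_mk]
    omega
  have havne : ∀ s t, s < t → t ≤ M → (av s).val < (av t).val := by
    intro s t hst htM
    exact_mod_cast hav s t hst htM
  set δ : ℕ → ℕ := fun i => dlt (av i).val (av (i+1)).val with hδ_def
  have hδn : ∀ i, i + 1 ≤ M → δ i < n := by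
    intro i hi
    exact dlt_lt_of_lt_pow ((av i).isLt.trans_le hNn) ((av (i+1)).isLt.trans_le hNn)
      (Nat.ne_of_lt (havne i (i+1) (by omega) hi))
  have hδne : ∀ s, s + 2 ≤ M → δ s ≠ δ (s+1) := by
    intro s hs
    exact dlt_ne_of_chain (havne s (s+1) (by omega) (by omega))
      (havne (s+1) (s+2) (by omega) hs)
  have hrunlt_inc : ∀ p q, (∀ s, p ≤ s → s < q → δ s < δ (s+1)) →
      ∀ s t, p ≤ s → s < t → t ≤ q → δ s < δ t := by
    intro p q hrun s t hps hst htq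
    have key : ∀ t', s + 1 ≤ t' → t' ≤ q → δ s < δ t' := by
      intro t' ht'
      induction t', ht' using Nat.le_induction with
      | base => intro h; exact hrun s hps (by omega)
      | succ t' ht' ih =>
        intro hq'
        rcases Nat.lt_or_ge s t' with h | h
        · exact (ih (by omega)).trans (hrun t' (by omega) (by omega))
        · have hst' : s = t' := by omega
          subst hst'
          exact hrun s hps (by omega)
    exact key t (by omega) htq
  have hrunlt_dec : ∀ p q, (∀ s, p ≤ s → s < q → δ (s+1) < δ s) →
      ∀ s t, p ≤ s → s < t → t ≤ q → δ t < δ s := by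
    intro p q hrun s t hps hst htq
    have key : ∀ t', s + 1 ≤ t' → t' ≤ q → δ t' < δ s := by
      intro t' ht'
      induction t', ht' using Nat.le_induction with
      | base => intro h; exact hrun s hps (by omega)
      | succ t' ht' ih =>
        intro hq'
        rcases Nat.lt_or_ge s t' with h | h
        · exact (hrun t' (by omega) (by omega)).trans (ih (by omega))
        · have hst' : s = t' := by omega
          subst hst'
          exact hrun s hps (by omega)
    exact key t (by omega) htq
  have hblkinc : ∀ q p, p < q → q ≤ M →
      (∀ s, p ≤ s → s + 1 < q → δ s < δ (s+1)) →
      dlt (av p).val (av q).val = δ (q-1) := by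
    intro q
    induction q using Nat.strong_induction_on with
    | _ q ih =>
      intro p hpq hqM hrun
      rcases eq_or_lt_of_le (Nat.succ_le_of_lt hpq) with heq | hlt
      · have hq : q = p + 1 := by omega
        subst hq
        rfl
      · have hmid : dlt (av p).val (av q).val
            = max (dlt (av p).val (av (q-1)).val) (dlt (av (q-1)).val (av q).val) := by
          have h1 := havne p (q-1) (by omega) (by omega)
          have h2 := havne (q-1) q (by omega) hqM
          exact dlt_trans_max h1 h2
        have hIH : dlt (av p).val (av (q-1)).val = δ (q-1-1) :=
          ih (q-1) (by omega) p (by omega) (by omega)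
            (fun s hs hs' => hrun s hs (by omega))
        have hq1 : δ (q-1) = dlt (av (q-1)).val (av q).val := by
          show dlt (av (q-1)).val (av (q-1+1)).val = _
          have e1 : q - 1 + 1 = q := by omega
          rw [e1]
        have hlast := hrun (q-2) (by omega) (by omega)
        have e2 : q - 2 + 1 = q - 1 := by omega
        rw [e2] at hlast
        have e3 : q - 1 - 1 = q - 2 := by omega
        rw [hmid, hIH, ← hq1, e3]
        omega
  have hblkdec : ∀ q p, p < q → q ≤ M →
      (∀ s, p ≤ s → s + 1 < q → δ (s+1) < δ s) →
      dlt (av p).val (av q).val = δ p := by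
    intro q
    induction q using Nat.strong_induction_on with
    | _ q ih =>
      intro p hpq hqM hrun
      rcases eq_or_lt_of_le (Nat.succ_le_of_lt hpq) with heq | hlt
      · have hq : q = p + 1 := by omega
        subst hq
        rfl
      · have hmid : dlt (av p).val (av q).val
            = max (dlt (av p).val (av (q-1)).val) (dlt (av (q-1)).val (av q).val) := by
          have h1 := havne p (q-1) (by omega) (by omega)
          have h2 := havne (q-1) q (by omega) hqM
          exact dlt_trans_max h1 h2
        have hIH : dlt (av p).val (av (q-1)).val = δ p :=
          ih (q-1) (by omega) p (by omega) (by omega)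
            (fun s hs hs' => hrun s hs (by omega))
        have hq1 : δ (q-1) = dlt (av (q-1)).val (av q).val := by
          show dlt (av (q-1)).val (av (q-1+1)).val = _
          have e1 : q - 1 + 1 = q := by omega
          rw [e1]
        have hless : δ (q-1) < δ p :=
          hrunlt_dec p (q-1) (fun s hs hs' => hrun s hs (by omega)) p (q-1)
            le_rfl (by omega) le_rfl
        rw [hmid, hIH, ← hq1]
        omega
  set c₀ : Bool := stepColor j hn χ ((Finset.range (j+1)).image av) with hc₀def
  have havg : ∀ s t, s < t → t < j + 1 → av s < av t :=
    fun s t hst htj => hav s t hst (by omega)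
  have hW0sub : (Finset.range (j+1)).image av ⊆ A := by
    intro x hx
    obtain ⟨t, _, rfl⟩ := Finset.mem_image.mp hx
    exact havmem t
  have hW0card : ((Finset.range (j+1)).image av).card = j + 1 := card_image_range havg
  have hc₀ : ∀ e, e ⊆ A → e.card = j + 1 → stepColor j hn χ e = c₀ :=
    fun e he hce => hA e _ he hW0sub hce hW0card
  set fδ : ℕ → Fin n := fun s => ⟨δ s % n, Nat.mod_lt _ hn⟩ with hfδdef
  have hfδval : ∀ s, s + 1 ≤ M → (fδ s).val = δ s := by
    intro s hs
    simp only [hfδdef]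
    exact Nat.mod_eq_of_lt (hδn s hs)
  -- increasing runs are short
  have Einc : ∀ p q, q + 1 ≤ M → p ≤ q →
      (∀ s, p ≤ s → s < q → δ s < δ (s+1)) → q - p + 1 ≤ ℓ - 1 := by
    intro p q hq hpq hrun
    have hmono := hrunlt_inc p q hrun
    have hinj : Set.InjOn fδ (Finset.Icc p q) := by
      intro x hx y hy hxy
      simp only [Finset.coe_Icc, Set.mem_Icc] at hx hy
      have hvx : (fδ x).val = δ x := hfδval x (by omega)
      have hvy : (fδ y).val = δ y := hfδval y (by omega)
      have hδeq : δ x = δ y := by rw [← hvx, ← hvy, hxy]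
      rcases lt_trichotomy x y with h | h | h
      · exact absurd hδeq (Nat.ne_of_lt (hmono x y hx.1 h hy.2))
      · exact h
      · exact absurd hδeq.symm (Nat.ne_of_lt (hmono y x hy.1 h hx.2))
    set V : Finset (Fin n) := (Finset.Icc p q).image fδ with hVdef
    have hVcard : V.card = q - p + 1 := by
      rw [hVdef, Finset.card_image_of_injOn hinj, Nat.card_Icc]
      omega
    have hVmono : MonoOn j χ V := by
      have H : ∀ s, s ⊆ V → s.card = j → χ s = c₀ := by
        intro s hsV hcs
        obtain ⟨P, hPIcc, hPim⟩ := Finset.subset_image_iff.mp hsV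
        have hPcard : P.card = j := by
          rw [← hPim] at hcs
          rw [← hcs]
          exact (Finset.card_image_of_injOn (hinj.mono (by exact_mod_cast hPIcc))).symm
        set I : ℕ → ℕ := fun t => (P.orderEmbOfFin hPcard) ⟨min t (j-1), by omega⟩ with hIdef
        have hIicc : ∀ t, p ≤ I t ∧ I t ≤ q := by
          intro t
          have := hPIcc (Finset.orderEmbOfFin_mem P hPcard ⟨min t (j-1), by omega⟩)
          exact Finset.mem_Icc.mp this
        have hImem : ∀ t, I t ∈ P := fun t => Finset.orderEmbOfFin_mem P hPcard _
        have hImono : ∀ s t, s < t → t ≤ j - 1 → I s < I t := by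
          intro s t hst htj
          apply (P.orderEmbOfFin hPcard).strictMono
          rw [Fin.mk_lt_mk]
          omega
        set g : ℕ → Fin N := fun t => if t = 0 then av (I 0) else av (I (t-1) + 1)
          with hgdef
        have hg : ∀ s t, s < t → t < j + 1 → g s < g t := by
          intro s t hst htj
          have ht0 : ¬ (t = 0) := by omega
          by_cases hs0 : s = 0
          · subst hs0
            simp only [hgdef, if_pos rfl, if_neg ht0]
            apply hav
            · rcases Nat.eq_or_lt_of_le (Nat.zero_le (t-1)) with h | h
              · have hI0 : I (t-1) = I 0 := by rw [← h]
                omega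
              · have := hImono 0 (t-1) h (by omega)
                omega
            · have := (hIicc (t-1)).2
              omega
          · simp only [hgdef, if_neg hs0, if_neg ht0]
            apply hav
            · have := hImono (s-1) (t-1) (by omega) (by omega)
              omega
            · have := (hIicc (t-1)).2
              omega
        have heval := stepColor_eval hn χ hg
        have hDg : ∀ t, t < j → dlt (g (min t j)).val (g (min (t+1) j)).val = δ (I t) := by
          intro t htj
          have hmt : min t j = t := by omega
          have hmt1 : min (t+1) j = t + 1 := by omega
          rw [hmt, hmt1]
          by_cases ht0 : t = 0
          · subst ht0
            simp only [hgdef, if_pos rfl, if_neg (by omega : ¬ (0+1 = 0))]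
            try rfl
          · simp only [hgdef, if_neg ht0, if_neg (by omega : ¬ (t+1 = 0))]
            have ht1 : t + 1 - 1 = t := by omega
            rw [ht1]
            apply hblkinc (I t + 1) (I (t-1) + 1)
            · have := hImono (t-1) t (by omega) (by omega)
              omega
            · have := (hIicc t).2
              omega
            · intro s hs hs'
              refine hrun s ?_ ?_
              · have := (hIicc (t-1)).1
                omega
              · have := (hIicc t).2
                omega
        have hpat : MonoPat j (fun t => dlt (g (min t j)).val (g (min (t+1) j)).val) := by
          left
          intro t ht s hst
          show dlt (g (min s j)).val (g (min (s+1) j)).val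
              < dlt (g (min t j)).val (g (min (t+1) j)).val
          rw [hDg t ht, hDg s (by omega)]
          exact hmono (I s) (I t) (hIicc s).1 (hImono s t hst (by omega)) (hIicc t).2
        have hstep : stepCore j n hn χ (fun t => dlt (g (min t j)).val (g (min (t+1) j)).val)
            = χ ((Finset.range j).image fun t =>
                (⟨(dlt (g (min t j)).val (g (min (t+1) j)).val) % n, Nat.mod_lt _ hn⟩ : Fin n)) := by
          rw [stepCore, if_pos hpat]
        have himg : ((Finset.range j).image fun t =>
            (⟨(dlt (g (min t j)).val (g (min (t+1) j)).val) % n, Nat.mod_lt _ hn⟩ : Fin n)) = s := by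
          rw [← hPim]
          have h1 : ((Finset.range j).image fun t => I t) = P := by
            apply Finset.eq_of_subset_of_card_le
            · intro x hx
              obtain ⟨t, _, rfl⟩ := Finset.mem_image.mp hx
              exact hImem t
            · rw [hPcard, card_image_range (fun s t hst htj => hImono s t hst (by omega))]
          rw [← h1, Finset.image_image]
          apply Finset.image_congr
          intro t ht
          simp only [Finset.mem_coe, Finset.coe_range, Set.mem_Iio] at ht
          apply Fin.ext
          simp only [Function.comp_apply, hfδdef]
          rw [hDg t ht]
        have hsubA : (Finset.range (j+1)).image g ⊆ A := by
          intro x hx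
          obtain ⟨t, _, rfl⟩ := Finset.mem_image.mp hx
          simp only [hgdef]
          split <;> exact havmem _
        have hcardA : ((Finset.range (j+1)).image g).card = j + 1 := card_image_range hg
        have hval := hc₀ _ hsubA hcardA
        rw [heval, hstep, himg] at hval
        exact hval
      intro s t hs ht hcs hct
      rw [H s hs hcs, H t ht hct]
    have := hχ V hVmono
    omega
  -- decreasing runs are short
  have Edec : ∀ p q, q + 1 ≤ M → p ≤ q →
      (∀ s, p ≤ s → s < q → δ (s+1) < δ s) → q - p + 1 ≤ ℓ - 1 := by
    intro p q hq hpq hrun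
    have hmono := hrunlt_dec p q hrun
    have hinj : Set.InjOn fδ (Finset.Icc p q) := by
      intro x hx y hy hxy
      simp only [Finset.coe_Icc, Set.mem_Icc] at hx hy
      have hvx : (fδ x).val = δ x := hfδval x (by omega)
      have hvy : (fδ y).val = δ y := hfδval y (by omega)
      have hδeq : δ x = δ y := by rw [← hvx, ← hvy, hxy]
      rcases lt_trichotomy x y with h | h | h
      · exact absurd hδeq.symm (Nat.ne_of_lt (hmono x y hx.1 h hy.2))
      · exact h
      · exact absurd hδeq (Nat.ne_of_lt (hmono y x hy.1 h hx.2))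
    set V : Finset (Fin n) := (Finset.Icc p q).image fδ with hVdef
    have hVcard : V.card = q - p + 1 := by
      rw [hVdef, Finset.card_image_of_injOn hinj, Nat.card_Icc]
      omega
    have hVmono : MonoOn j χ V := by
      have H : ∀ s, s ⊆ V → s.card = j → χ s = c₀ := by
        intro s hsV hcs
        obtain ⟨P, hPIcc, hPim⟩ := Finset.subset_image_iff.mp hsV
        have hPcard : P.card = j := by
          rw [← hPim] at hcs
          rw [← hcs]
          exact (Finset.card_image_of_injOn (hinj.mono (by exact_mod_cast hPIcc))).symm
        set I : ℕ → ℕ := fun t => (P.orderEmbOfFin hPcard) ⟨min t (j-1), by omega⟩ with hIdef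
        have hIicc : ∀ t, p ≤ I t ∧ I t ≤ q := by
          intro t
          have := hPIcc (Finset.orderEmbOfFin_mem P hPcard ⟨min t (j-1), by omega⟩)
          exact Finset.mem_Icc.mp this
        have hImem : ∀ t, I t ∈ P := fun t => Finset.orderEmbOfFin_mem P hPcard _
        have hImono : ∀ s t, s < t → t ≤ j - 1 → I s < I t := by
          intro s t hst htj
          apply (P.orderEmbOfFin hPcard).strictMono
          rw [Fin.mk_lt_mk]
          omega
        set g : ℕ → Fin N := fun t => if t ≤ j - 1 then av (I t) else av (I (j-1) + 1)
          with hgdef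
        have hg : ∀ s t, s < t → t < j + 1 → g s < g t := by
          intro s t hst htj
          have hs1 : s ≤ j - 1 := by omega
          by_cases ht1 : t ≤ j - 1
          · simp only [hgdef, if_pos hs1, if_pos ht1]
            exact hav _ _ (hImono s t hst ht1) (by have := (hIicc t).2; omega)
          · simp only [hgdef, if_pos hs1, if_neg ht1]
            apply hav
            · rcases Nat.eq_or_lt_of_le hs1 with h | h
              · have hIs : I s = I (j-1) := by rw [h]
                omega
              · have := hImono s (j-1) h le_rfl
                omega
            · have := (hIicc (j-1)).2
              omega
        have heval := stepColor_eval hn χ hg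
        have hDg : ∀ t, t < j → dlt (g (min t j)).val (g (min (t+1) j)).val = δ (I t) := by
          intro t htj
          have hmt : min t j = t := by omega
          have hmt1 : min (t+1) j = t + 1 := by omega
          rw [hmt, hmt1]
          by_cases htj1 : t + 1 ≤ j - 1
          · simp only [hgdef, if_pos (by omega : t ≤ j - 1), if_pos htj1]
            apply hblkdec (I (t+1)) (I t)
            · exact hImono t (t+1) (by omega) htj1
            · have := (hIicc (t+1)).2
              omega
            · intro s hs hs'
              refine hrun s ?_ ?_
              · have := (hIicc t).1
                omega
              · have := (hIicc (t+1)).2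
                omega
          · have htj2 : t = j - 1 := by omega
            subst htj2
            simp only [hgdef, if_pos (le_refl (j-1)), if_neg (by omega : ¬ (j - 1 + 1 ≤ j - 1))]
            try rfl
        have hpat : MonoPat j (fun t => dlt (g (min t j)).val (g (min (t+1) j)).val) := by
          right
          intro t ht s hst
          show dlt (g (min t j)).val (g (min (t+1) j)).val
              < dlt (g (min s j)).val (g (min (s+1) j)).val
          rw [hDg t ht, hDg s (by omega)]
          exact hmono (I s) (I t) (hIicc s).1 (hImono s t hst (by omega)) (hIicc t).2
        have hstep : stepCore j n hn χ (fun t => dlt (g (min t j)).val (g (min (t+1) j)).val)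
            = χ ((Finset.range j).image fun t =>
                (⟨(dlt (g (min t j)).val (g (min (t+1) j)).val) % n, Nat.mod_lt _ hn⟩ : Fin n)) := by
          rw [stepCore, if_pos hpat]
        have himg : ((Finset.range j).image fun t =>
            (⟨(dlt (g (min t j)).val (g (min (t+1) j)).val) % n, Nat.mod_lt _ hn⟩ : Fin n)) = s := by
          rw [← hPim]
          have h1 : ((Finset.range j).image fun t => I t) = P := by
            apply Finset.eq_of_subset_of_card_le
            · intro x hx
              obtain ⟨t, _, rfl⟩ := Finset.mem_image.mp hx
              exact hImem t
            · rw [hPcard, card_image_range (fun s t hst htj => hImono s t hst (by omega))]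
          rw [← h1, Finset.image_image]
          apply Finset.image_congr
          intro t ht
          simp only [Finset.mem_coe, Finset.coe_range, Set.mem_Iio] at ht
          apply Fin.ext
          simp only [Function.comp_apply, hfδdef]
          rw [hDg t ht]
        have hsubA : (Finset.range (j+1)).image g ⊆ A := by
          intro x hx
          obtain ⟨t, _, rfl⟩ := Finset.mem_image.mp hx
          simp only [hgdef]
          split <;> exact havmem _
        have hcardA : ((Finset.range (j+1)).image g).card = j + 1 := card_image_range hg
        have hval := hc₀ _ hsubA hcardA
        rw [heval, hstep, himg] at hval
        exact hval
      intro s t hs ht hcs hct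
      rw [H s hs hcs, H t ht hct]
    have := hχ V hVmono
    omega
  -- window propagation
  have hwinkey : ∀ i, i + j + 1 ≤ m →
      (MonoPat j (fun t => δ (i + t)) ∨ decide (δ i < δ (i+1)) = c₀) := by
    intro i hi
    set g : ℕ → Fin N := fun t => av (i + min t j) with hgdef
    have hg : ∀ s t, s < t → t < j + 1 → g s < g t := by
      intro s t hst htj
      simp only [hgdef]
      exact hav _ _ (by omega) (by omega)
    have heval := stepColor_eval hn χ hg
    have hDg : ∀ t, t < j →
        (fun t => dlt (g (min t j)).val (g (min (t+1) j)).val) t = δ (i + t) := by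
      intro t ht
      show dlt (g (min t j)).val (g (min (t+1) j)).val = δ (i + t)
      have hmt : min t j = t := by omega
      have hmt1 : min (t+1) j = t + 1 := by omega
      rw [hmt, hmt1]
      simp only [hgdef]
      rw [hmt, hmt1]
      show dlt (av (i+t)).val (av (i+(t+1))).val = δ (i+t)
      rw [show i + (t+1) = (i+t)+1 from by omega]
    by_cases hpat : MonoPat j (fun t => δ (i + t))
    · left; exact hpat
    · right
      have hpat' : ¬ MonoPat j (fun t => dlt (g (min t j)).val (g (min (t+1) j)).val) := by
        intro hcon
        apply hpat
        rcases hcon with hc1 | hc1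
        · left
          intro t ht s hst
          have h1 := hc1 t ht s hst
          rw [hDg t ht, hDg s (by omega)] at h1
          exact h1
        · right
          intro t ht s hst
          have h1 := hc1 t ht s hst
          rw [hDg t ht, hDg s (by omega)] at h1
          exact h1
      have hstep : stepCore j n hn χ (fun t => dlt (g (min t j)).val (g (min (t+1) j)).val)
          = decide ((fun t => dlt (g (min t j)).val (g (min (t+1) j)).val) 0
              < (fun t => dlt (g (min t j)).val (g (min (t+1) j)).val) 1) := by
        rw [stepCore, if_neg hpat']
      have hsubA : (Finset.range (j+1)).image g ⊆ A := by
        intro x hx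
        obtain ⟨t, _, rfl⟩ := Finset.mem_image.mp hx
        simp only [hgdef]
        exact havmem _
      have hcardA : ((Finset.range (j+1)).image g).card = j + 1 := card_image_range hg
      have hval := hc₀ _ hsubA hcardA
      rw [heval, hstep] at hval
      rw [hDg 0 (by omega), hDg 1 (by omega)] at hval
      rw [show i + 0 = i from rfl] at hval
      exact hval
  -- extract pattern facts
  have hwin_desc : c₀ = true → ∀ i, i + j + 1 ≤ m → δ (i+1) < δ i →
      ∀ s, i ≤ s → s + 2 ≤ i + j → δ (s+1) < δ s := by
    intro hc i hi hdesc s his hsij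
    rcases hwinkey i hi with hpat | hdec
    · rcases hpat with hincr | hdecr
      · exfalso
        have h1 : δ (i + 0) < δ (i + 1) := hincr 1 (by omega) 0 (by omega)
        rw [show i + 0 = i from rfl] at h1
        omega
      · have h1 : δ (i + (s + 1 - i)) < δ (i + (s - i)) :=
          hdecr (s + 1 - i) (by omega) (s - i) (by omega)
        rw [show i + (s+1-i) = s+1 from by omega, show i + (s-i) = s from by omega] at h1
        exact h1
    · rw [hc] at hdec
      simp at hdec
      omega
  have hwin_asc : c₀ = false → ∀ i, i + j + 1 ≤ m → δ i < δ (i+1) →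
      ∀ s, i ≤ s → s + 2 ≤ i + j → δ s < δ (s+1) := by
    intro hc i hi hasc s his hsij
    rcases hwinkey i hi with hpat | hdec
    · rcases hpat with hincr | hdecr
      · have h1 : δ (i + (s - i)) < δ (i + (s + 1 - i)) :=
          hincr (s + 1 - i) (by omega) (s - i) (by omega)
        rw [show i + (s+1-i) = s+1 from by omega, show i + (s-i) = s from by omega] at h1
        exact h1
      · exfalso
        have h1 : δ (i + 1) < δ (i + 0) := hdecr 1 (by omega) 0 (by omega)
        rw [show i + 0 = i from rfl] at h1
        omega
    · rw [hc] at hdec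
      simp at hdec
      omega
  -- conclude via seq_core
  rcases Bool.eq_false_or_eq_true c₀ with hc | hc
  · have hcore := seq_core δ m j (ℓ - 1) hj
      (fun s hs => hδne s (by omega))
      (fun i hi hd s his hs2 => hwin_desc hc i hi hd s his hs2)
      (fun p q hq hpq hrun => Einc p q (by omega) hpq hrun)
      (fun p q hq hpq hrun => Edec p q (by omega) hpq hrun)
    omega
  · -- ascending case: flip the sequence
    have Hne' : ∀ s, s + 3 ≤ m → n - δ s ≠ n - δ (s+1) := by
      intro s hs
      have h1 := hδn s (by omega)
      have h2 := hδn (s+1) (by omega)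
      have h3 := hδne s (by omega)
      omega
    have W' : ∀ i, i + j + 1 ≤ m → n - δ (i+1) < n - δ i →
        ∀ s, i ≤ s → s + 2 ≤ i + j → n - δ (s+1) < n - δ s := by
      intro i hi hflip s his hsij
      have h1 := hδn i (by omega)
      have h2 := hδn (i+1) (by omega)
      have h3 := hδn s (by omega)
      have h4 := hδn (s+1) (by omega)
      have hasc : δ i < δ (i+1) := by omega
      have := hwin_asc hc i hi hasc s his hsij
      omega
    have Rinc' : ∀ p q, q ≤ m - 2 → p ≤ q →
        (∀ s, p ≤ s → s < q → n - δ s < n - δ (s+1)) → q - p + 1 ≤ ℓ - 1 := by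
      intro p q hq hpq hrun
      apply Edec p q (by omega) hpq
      intro s hs hsq
      have h1 := hδn s (by omega)
      have h2 := hδn (s+1) (by omega)
      have := hrun s hs hsq
      omega
    have Rdec' : ∀ p q, q ≤ m - 2 → p ≤ q →
        (∀ s, p ≤ s → s < q → n - δ (s+1) < n - δ s) → q - p + 1 ≤ ℓ - 1 := by
      intro p q hq hpq hrun
      apply Einc p q (by omega) hpq
      intro s hs hsq
      have h1 := hδn s (by omega)
      have h2 := hδn (s+1) (by omega)
      have := hrun s hs hsq
      omega
    have hcore := seq_core (fun s => n - δ s) m j (ℓ - 1) hj Hne' W' Rinc' Rdec'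
    omega
end StepUp

section Lower

/-- The lower-bound functions: `Lfun u N` bounds the largest monochromatic set
of our coloring of `u`-subsets of `Fin N`. -/
def Lfun : ℕ → ℕ → ℕ
  | 0, _ => 1
  | 1, _ => 1
  | 2, N => 2 * Nat.log 2 N + 5
  | 3, N => 3 * Nat.sqrt (Nat.log 2 N) + 10
  | (u+4), N => 2 * Lfun (u+3) (Nat.clog 2 N) + 3*(u+3) + 6

lemma two_mul_choose_two (m : ℕ) : 2 * m.choose 2 = m * (m - 1) := by
  rcases m with _ | m
  · simp
  · rw [Nat.choose_two_right]
    simp only [Nat.add_sub_cancel]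
    have he : 2 ∣ (m+1) * m := by
      rcases Nat.even_or_odd m with h | h
      · exact Dvd.dvd.mul_left h.two_dvd _
      · exact Dvd.dvd.mul_right (h.add_one).two_dvd _
    rw [Nat.mul_div_cancel' he]

lemma six_mul_choose_three (m : ℕ) : 6 * m.choose 3 = m * (m-1) * (m-2) := by
  have h1 : m.choose 3 = m.descFactorial 3 / Nat.factorial 3 :=
    Nat.choose_eq_descFactorial_div_factorial m 3
  have h2 : Nat.factorial 3 ∣ m.descFactorial 3 := Nat.factorial_dvd_descFactorial m 3
  have h3 : Nat.factorial 3 = 6 := rfl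
  rw [h1, h3] at *
  rw [Nat.mul_div_cancel' (h3 ▸ h2)]
  show m.descFactorial 3 = _
  rw [Nat.descFactorial_succ, Nat.descFactorial_succ, Nat.descFactorial_succ,
    Nat.descFactorial_zero]
  simp only [Nat.sub_zero]
  ring

/-- The lower bound colorings. -/
theorem low : ∀ (u : ℕ), 2 ≤ u → ∀ N : ℕ, ∃ χ : Finset (Fin N) → Bool,
    ∀ A, MonoOn u χ A → A.card < Lfun u N := by
  intro u
  induction u using Nat.strong_induction_on with
  | _ u ih =>
    intro hu N
    match u, hu with
    | 2, _ =>
      set x := Nat.log 2 N with hx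
      set m := 2 * x + 4 with hmdef
      have hnum : 2 * N ^ m < 2 ^ (m.choose 2) := by
        have hN : N ≤ 2 ^ (x + 1) := (Nat.lt_pow_succ_log_self (by norm_num) N).le
        have h1 : 2 * N ^ m ≤ 2 ^ (1 + (x+1) * m) := by
          calc 2 * N ^ m ≤ 2 * (2 ^ (x+1)) ^ m := by
                have := Nat.pow_le_pow_left hN m
                omega
            _ = 2 ^ (1 + (x+1)*m) := by rw [← pow_mul, pow_add]; ring
        have h2 : 1 + (x+1) * m < m.choose 2 := by
          have h3 := two_mul_choose_two m
          have e : m - 1 = 2*x + 3 := by omega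
          rw [e] at h3
          nlinarith [h3]
        calc 2 * N ^ m ≤ 2 ^ (1 + (x+1)*m) := h1
          _ < 2 ^ (m.choose 2) := Nat.pow_lt_pow_right (by norm_num) h2
      obtain ⟨χ, hχ⟩ := counting 2 m N (by omega) hnum
      exact ⟨χ, fun A hA => lt_of_lt_of_le (hχ A hA) (by rw [show Lfun 2 N = 2 * x + 5 from rfl]; omega)⟩
    | 3, _ =>
      set x := Nat.log 2 N with hx
      set s := Nat.sqrt x with hs
      set m := 3 * s + 9 with hmdef
      have hnum : 2 * N ^ m < 2 ^ (m.choose 3) := by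
        have hN : N ≤ 2 ^ (x + 1) := (Nat.lt_pow_succ_log_self (by norm_num) N).le
        have h1 : 2 * N ^ m ≤ 2 ^ (1 + (x+1) * m) := by
          calc 2 * N ^ m ≤ 2 * (2 ^ (x+1)) ^ m := by
                have := Nat.pow_le_pow_left hN m
                omega
            _ = 2 ^ (1 + (x+1)*m) := by rw [← pow_mul, pow_add]; ring
        have h2 : 1 + (x+1) * m < m.choose 3 := by
          have h3 := six_mul_choose_three m
          have hxs : x < (s+1)^2 := by rw [hs]; exact Nat.lt_succ_sqrt' x
          have h6 : 6 * (1 + (x+1)*m) < 6 * m.choose 3 := by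
            have e1 : m - 1 = 3*s+8 := by omega
            have e2 : m - 2 = 3*s+7 := by omega
            rw [e1, e2] at h3
            have hx1 : x + 1 ≤ s^2 + 2*s + 1 := by nlinarith [Nat.lt_succ_sqrt' x]
            have hm9 : m = 3*s+9 := hmdef
            nlinarith [h3, hx1, hm9]
          omega
        calc 2 * N ^ m ≤ 2 ^ (1 + (x+1)*m) := h1
          _ < 2 ^ (m.choose 3) := Nat.pow_lt_pow_right (by norm_num) h2
      obtain ⟨χ, hχ⟩ := counting 3 m N (by omega) hnum
      exact ⟨χ, fun A hA => lt_of_lt_of_le (hχ A hA) (by rw [show Lfun 3 N = 3 * s + 10 from rfl]; omega)⟩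
    | (v+4), _ =>
      -- stepping up from uniformity v+3
      rcases Nat.lt_or_ge N 2 with hN2 | hN2
      · refine ⟨fun _ => false, fun A hA => ?_⟩
        have h1 : A.card ≤ N := by simpa using A.card_le_univ
        have h2 : 0 ≤ Lfun (v+3) (Nat.clog 2 N) := Nat.zero_le _
        show A.card < 2 * Lfun (v+3) (Nat.clog 2 N) + 3*(v+3) + 6
        omega
      · set n := Nat.clog 2 N with hn
        have hnpos : 0 < n := Nat.clog_pos (by norm_num) (by omega)
        have hNn : N ≤ 2 ^ n := Nat.le_pow_clog (by norm_num) N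
        obtain ⟨χb, hχb⟩ := ih (v+3) (by omega) (by omega) n
        refine ⟨stepColor (v+3) hnpos χb, fun A hA => ?_⟩
        have := step_up (by omega) hnpos hNn χb (Lfun (v+3) n) hχb A hA
        show A.card < 2 * Lfun (v+3) n + 3*(v+3) + 6
        omega

end Lower

section Upper

/-- Explicit Ramsey bound function. -/
def RkBound : ℕ → ℕ → ℕ → ℕ
  | 0, _, _ => 1
  | 1, r, l => r * l
  | (k+2), r, l => (r+2) ^ ((RkBound (k+1) r l + 2) ^ (k+1))

lemma RkBound_mono (k r : ℕ) : ∀ {l1 l2 : ℕ}, l1 ≤ l2 →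
    RkBound k r l1 ≤ RkBound k r l2 := by
  induction k with
  | zero => intro l1 l2 _; exact le_refl _
  | succ k ihk =>
    intro l1 l2 h
    match k with
    | 0 => exact Nat.mul_le_mul_left r h
    | (k'+1) =>
      show (r+2) ^ ((RkBound (k'+1) r l1 + 2) ^ (k'+1))
        ≤ (r+2) ^ ((RkBound (k'+1) r l2 + 2) ^ (k'+1))
      apply Nat.pow_le_pow_right (by omega)
      apply Nat.pow_le_pow_left
      have := ihk (l1 := l1) (l2 := l2) h
      omega

variable {α : Type} [LinearOrder α] [Fintype α] {C : Type} [Fintype C] [Nonempty C]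

/-- Pre-homogeneity invariant. -/
def Pre (k : ℕ) (χ : Finset α → C) (P S : Finset α) : Prop :=
  ∀ F : Finset α, F ⊆ P → F.card = k → ∀ x y : α, x ∈ P ∪ S → y ∈ P ∪ S →
    (∀ f ∈ F, f < x) → (∀ f ∈ F, f < y) → χ (insert x F) = χ (insert y F)

lemma greedy (k : ℕ) (hk : 1 ≤ k) (χ : Finset α → C) (Q : ℕ) (hQ2 : 2 ≤ Q) :
    ∀ (mm : ℕ) (P S : Finset α),
      (∀ p ∈ P, ∀ x ∈ S, p < x) →
      (∀ i, i < P.card + mm → (Fintype.card C) ^ (i.choose (k-1)) ≤ Q) →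
      Pre k χ P S → Q ^ mm ≤ S.card + 1 →
      ∃ P' : Finset α, P ⊆ P' ∧ P'.card = P.card + mm ∧ Pre k χ P' ∅ := by
  intro mm
  induction mm with
  | zero =>
    intro P S hdisj hfib hpre hS
    refine ⟨P, le_refl _, by omega, ?_⟩
    intro F hF hFc x y hx hy hfx hfy
    rw [Finset.union_empty] at hx hy
    exact hpre F hF hFc x y (Finset.mem_union_left _ hx) (Finset.mem_union_left _ hy) hfx hfy
  | succ mm ihm =>
    intro P S hdisj hfib hpre hS
    classical
    have hq1 : 1 ≤ Q ^ mm := Nat.one_le_pow _ _ (by omega)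
    have hpow : Q ^ (mm+1) = Q * Q ^ mm := by rw [pow_succ]; ring
    have hSne : S.Nonempty := by
      rw [← Finset.card_pos]
      have h1 : Q ≤ Q ^ (mm+1) := Nat.le_self_pow (by omega) Q
      omega
    set a := S.min' hSne with hadef
    have haS : a ∈ S := S.min'_mem hSne
    have haP : a ∉ P := fun h => lt_irrefl a (hdisj a h a haS)
    set K := (Finset.powersetCard k (insert a P)).filter (fun F => a ∈ F) with hKdef
    have hKcard : K.card ≤ P.card.choose (k-1) := by
      have h1 : K.card ≤ (Finset.powersetCard (k-1) P).card := by
        apply Finset.card_le_card_of_injOn (fun F => F.erase a)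
        · intro F hF
          rw [hKdef, Finset.mem_coe, Finset.mem_filter, Finset.mem_powersetCard] at hF
          rw [Finset.mem_coe, Finset.mem_powersetCard]
          constructor
          · intro z hz
            have hzF : z ∈ F := Finset.mem_of_mem_erase hz
            have hzne : z ≠ a := Finset.ne_of_mem_erase hz
            have := hF.1.1 hzF
            rw [Finset.mem_insert] at this
            tauto
          · rw [Finset.card_erase_of_mem hF.2, hF.1.2]
        · intro F1 h1 F2 h2 heq
          rw [Finset.mem_coe, hKdef, Finset.mem_filter] at h1 h2
          have e1 : insert a (F1.erase a) = F1 := Finset.insert_erase h1.2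
          have e2 : insert a (F2.erase a) = F2 := Finset.insert_erase h2.2
          rw [← e1, ← e2]
          simp only at heq
          rw [heq]
      rwa [Finset.card_powersetCard] at h1
    set keyfun : α → (↥K → C) := fun x F => χ (insert x F.val) with hkeydef
    have hcardfun : (Finset.univ : Finset (↥K → C)).card ≤ Q := by
      rw [Finset.card_univ, Fintype.card_fun, Fintype.card_coe]
      calc (Fintype.card C) ^ K.card ≤ (Fintype.card C) ^ (P.card.choose (k-1)) :=
            Nat.pow_le_pow_right Fintype.card_pos hKcard
        _ ≤ Q := hfib P.card (by omega)
    obtain ⟨q2, hq2⟩ : ∃ q2, Q ^ mm = q2 + 1 := ⟨Q^mm - 1, by omega⟩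
    have hcount : (Finset.univ : Finset (↥K → C)).card * (Q ^ mm - 1) ≤ (S.erase a).card := by
      rw [Finset.card_erase_of_mem haS]
      have h1 : (Finset.univ : Finset (↥K → C)).card * (Q ^ mm - 1) ≤ Q * q2 := by
        have : Q ^ mm - 1 = q2 := by omega
        rw [this]
        exact Nat.mul_le_mul hcardfun (le_refl q2)
      have h2 : Q * q2 + Q = Q * Q^mm := by rw [hq2, Nat.mul_succ]
      have h3 : Q * Q^mm ≤ S.card + 1 := by rw [← hpow]; exact hS
      omega
    obtain ⟨kv, _, hkv⟩ := Finset.exists_le_card_fiber_of_mul_le_card_of_maps_to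
      (fun x _ => Finset.mem_univ (keyfun x)) Finset.univ_nonempty hcount
    set S' := (S.erase a).filter (fun x => keyfun x = kv) with hS'def
    have hdisj' : ∀ p ∈ insert a P, ∀ x ∈ S', p < x := by
      intro p hp x hx
      rw [hS'def, Finset.mem_filter] at hx
      have hxS : x ∈ S.erase a := hx.1
      rcases Finset.mem_insert.mp hp with rfl | hpP
      · exact lt_of_le_of_ne (S.min'_le x (Finset.mem_of_mem_erase hxS))
          (Ne.symm (Finset.ne_of_mem_erase hxS))
      · exact hdisj p hpP x (Finset.mem_of_mem_erase hxS)
    have hpre' : Pre k χ (insert a P) S' := by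
      intro F hF hFc x y hx hy hfx hfy
      by_cases haF : a ∈ F
      · have hmemS' : ∀ z, z ∈ insert a P ∪ S' → a < z → z ∈ S' := by
          intro z hz haz
          rcases Finset.mem_union.mp hz with h | h
          · rcases Finset.mem_insert.mp h with rfl | hP'
            · exact absurd haz (lt_irrefl a)
            · exact absurd haz (not_lt.mpr (le_of_lt (hdisj z hP' a haS)))
          · exact h
        have hxS' : x ∈ S' := hmemS' x hx (hfx a haF)
        have hyS' : y ∈ S' := hmemS' y hy (hfy a haF)
        have hxkv : keyfun x = kv := (Finset.mem_filter.mp hxS').2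
        have hykv : keyfun y = kv := (Finset.mem_filter.mp hyS').2
        have hFK : F ∈ K := by
          rw [hKdef, Finset.mem_filter, Finset.mem_powersetCard]
          exact ⟨⟨hF, hFc⟩, haF⟩
        have := congrFun (hxkv.trans hykv.symm) ⟨F, hFK⟩
        simpa [hkeydef] using this
      · have hFP : F ⊆ P := by
          intro z hz
          rcases Finset.mem_insert.mp (hF hz) with rfl | h
          · exact absurd hz haF
          · exact h
        have hmem : ∀ z, z ∈ insert a P ∪ S' → z ∈ P ∪ S := by
          intro z hz
          rcases Finset.mem_union.mp hz with h | h
          · rcases Finset.mem_insert.mp h with rfl | h'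
            · exact Finset.mem_union_right _ haS
            · exact Finset.mem_union_left _ h'
          · rw [hS'def, Finset.mem_filter] at h
            exact Finset.mem_union_right _ (Finset.mem_of_mem_erase h.1)
        exact hpre F hFP hFc x y (hmem x hx) (hmem y hy) hfx hfy
    have hS'card : Q ^ mm ≤ S'.card + 1 := by
      have := hkv
      omega
    have hfib' : ∀ i, i < (insert a P).card + mm → (Fintype.card C) ^ (i.choose (k-1)) ≤ Q := by
      intro i hi
      apply hfib
      rw [Finset.card_insert_of_notMem haP] at hi
      omega
    obtain ⟨P', hPP', hP'card, hP'pre⟩ := ihm (insert a P) S' hdisj' hfib' hpre' hS'card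
    refine ⟨P', (Finset.subset_insert a P).trans hPP', ?_, hP'pre⟩
    rw [hP'card, Finset.card_insert_of_notMem haP]
    omega

end Upper

section UpperMain

theorem upper : ∀ (k : ℕ), 1 ≤ k → ∀ (ℓ : ℕ) (α : Type) [LinearOrder α] [Fintype α]
    (C : Type) [Fintype C] [Nonempty C] (χ : Finset α → C),
    RkBound k (Fintype.card C) ℓ ≤ Fintype.card α →
    ∃ A : Finset α, ℓ ≤ A.card ∧ MonoOn k χ A := by
  intro k hk
  induction k, hk using Nat.le_induction with
  | base =>
    intro ℓ α _ _ C _ _ χ hcard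
    classical
    rcases Nat.eq_zero_or_pos ℓ with rfl | hℓ
    · refine ⟨∅, by simp, ?_⟩
      intro s t hs ht hcs hct
      rw [Finset.subset_empty] at hs
      subst hs
      simp at hcs
    · have hpig := Finset.exists_le_card_fiber_of_mul_le_card_of_maps_to
        (s := (Finset.univ : Finset α)) (t := (Finset.univ : Finset C))
        (f := fun x => χ {x}) (n := ℓ)
        (fun x _ => Finset.mem_univ _) Finset.univ_nonempty
        (by rw [Finset.card_univ, Finset.card_univ]; exact hcard)
      obtain ⟨c, _, hc⟩ := hpig
      refine ⟨Finset.univ.filter (fun x => χ {x} = c), hc, ?_⟩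
      intro s t hs ht hcs hct
      obtain ⟨x, rfl⟩ := Finset.card_eq_one.mp hcs
      obtain ⟨y, rfl⟩ := Finset.card_eq_one.mp hct
      have hx := (Finset.mem_filter.mp (hs (Finset.mem_singleton_self x))).2
      have hy := (Finset.mem_filter.mp (ht (Finset.mem_singleton_self y))).2
      rw [hx, hy]
  | succ k hk1 ihk =>
    intro ℓ α _ _ C _ _ χ hcard
    classical
    set r := Fintype.card C with hrdef
    have hr1 : 1 ≤ r := Fintype.card_pos
    set M := RkBound k r ℓ with hMdef
    obtain ⟨k', rfl⟩ : ∃ k', k = k' + 1 := ⟨k-1, by omega⟩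
    set Q := (r+2) ^ ((M+2)^k') with hQdef
    have hQ2 : 2 ≤ Q := by
      calc 2 ≤ r + 2 := by omega
        _ = (r+2)^1 := (pow_one _).symm
        _ ≤ Q := Nat.pow_le_pow_right (by omega) (Nat.one_le_pow _ _ (by omega))
    have hRkeq : RkBound (k'+2) r ℓ = (r+2) ^ ((M+2)^(k'+1)) := rfl
    have hQM : Q ^ (M+1) ≤ Fintype.card α := by
      have h1 : Q ^ (M+1) = (r+2) ^ ((M+2)^k' * (M+1)) := by rw [hQdef, ← pow_mul]
      have h2 : (M+2)^k' * (M+1) ≤ (M+2)^(k'+1) := by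
        rw [pow_succ]
        exact Nat.mul_le_mul_left _ (by omega)
      calc Q ^ (M+1) ≤ (r+2) ^ ((M+2)^(k'+1)) := by
            rw [h1]; exact Nat.pow_le_pow_right (by omega) h2
        _ = RkBound (k'+2) r ℓ := hRkeq.symm
        _ ≤ Fintype.card α := hcard
    have hfib : ∀ i, i < (∅ : Finset α).card + (M+1) →
        (Fintype.card C) ^ (i.choose (k'+1-1)) ≤ Q := by
      intro i hi
      rw [Finset.card_empty, Nat.zero_add] at hi
      have h1 : i.choose k' ≤ (M+2)^k' := by
        calc i.choose k' ≤ i ^ k' := choose_le_pow' i k'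
          _ ≤ (M+2)^ k' := Nat.pow_le_pow_left (by omega) _
      calc (Fintype.card C) ^ (i.choose (k'+1-1)) ≤ (r+2) ^ (i.choose k') := by
            apply Nat.pow_le_pow_left
            omega
        _ ≤ (r+2)^((M+2)^k') := Nat.pow_le_pow_right (by omega) h1
        _ = Q := rfl
    have hpre0 : Pre (k'+1) χ ∅ Finset.univ := by
      intro F hF hFc x y _ _ _ _
      rw [Finset.subset_empty] at hF
      subst hF
      simp at hFc
    obtain ⟨P', hP'sub, hP'card, hP'pre⟩ := greedy (k'+1) (by omega) χ Q hQ2 (M+1) ∅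
      Finset.univ (by intro p hp; exact absurd hp (Finset.notMem_empty p)) hfib hpre0
      (by
        rw [Finset.card_univ]
        omega)
    rw [Finset.card_empty, Nat.zero_add] at hP'card
    have hP'ne : P'.Nonempty := by rw [← Finset.card_pos]; omega
    set astar := P'.max' hP'ne with hastar
    set P₀ := P'.erase astar with hP₀def
    have hP₀card : P₀.card = M := by
      rw [hP₀def, Finset.card_erase_of_mem (P'.max'_mem hP'ne), hP'card]
      omega
    have hcard₀ : RkBound (k'+1) r ℓ ≤ Fintype.card ↥P₀ := by
      rw [Fintype.card_coe, hP₀card]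
    set emb : ↥P₀ ↪ α := Function.Embedding.subtype _ with hembdef
    set χ'' : Finset ↥P₀ → C := fun F => χ (insert astar (F.map emb)) with hχ''def
    obtain ⟨A', hA'card, hA'mono⟩ := ihk ℓ ↥P₀ C χ'' hcard₀
    set A := A'.map emb with hAdef
    have hAP₀ : A ⊆ P₀ := by
      intro z hz
      rw [hAdef, Finset.mem_map] at hz
      obtain ⟨w, _, rfl⟩ := hz
      exact w.2
    have hAcard : ℓ ≤ A.card := by rw [hAdef, Finset.card_map]; exact hA'card
    refine ⟨A, hAcard, ?_⟩
    have key : ∀ s, s ⊆ A → s.card = k' + 2 → ∃ F', F' ⊆ A' ∧ F'.card = k' + 1 ∧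
        χ s = χ'' F' := by
      intro s hsA hcs
      have hsne : s.Nonempty := by rw [← Finset.card_pos]; omega
      set x := s.max' hsne with hxdef
      set F := s.erase x with hFdef
      have hFcard : F.card = k' + 1 := by
        rw [hFdef, Finset.card_erase_of_mem (s.max'_mem hsne), hcs]
        omega
      have hFA : F ⊆ A := (Finset.erase_subset _ _).trans hsA
      have hFP₀ : F ⊆ P₀ := hFA.trans hAP₀
      have hs1 : χ s = χ (insert x F) := by
        rw [hFdef, Finset.insert_erase (s.max'_mem hsne)]
      have hxP' : x ∈ P' := Finset.mem_of_mem_erase (hAP₀ (hsA (s.max'_mem hsne)))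
      have hastarP' : astar ∈ P' := P'.max'_mem hP'ne
      have hFx : ∀ f ∈ F, f < x := by
        intro f hf
        exact lt_of_le_of_ne (s.le_max' f (Finset.mem_of_mem_erase hf))
          (Finset.ne_of_mem_erase hf)
      have hFa : ∀ f ∈ F, f < astar := by
        intro f hf
        have hfP₀ : f ∈ P₀ := hFP₀ hf
        exact lt_of_le_of_ne (P'.le_max' f (Finset.mem_of_mem_erase hfP₀))
          (Finset.ne_of_mem_erase hfP₀)
      have hs2 : χ (insert x F) = χ (insert astar F) := by
        apply hP'pre F (hFP₀.trans (Finset.erase_subset _ _)) hFcard x astar ?_ ?_ hFx hFa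
        · rw [Finset.union_empty]; exact hxP'
        · rw [Finset.union_empty]; exact hastarP'
      have hFsub : F ⊆ A'.map emb := by rw [← hAdef]; exact hFA
      obtain ⟨F', hF'A', hF'map⟩ := Finset.subset_map_iff.mp hFsub
      refine ⟨F', hF'A', ?_, ?_⟩
      · have : F.card = F'.card := by rw [hF'map, Finset.card_map]
        omega
      · rw [hs1, hs2, hχ''def]
        rw [hF'map]
    intro s t hs ht hcs hct
    obtain ⟨F1, h1A, h1c, h1e⟩ := key s hs hcs
    obtain ⟨F2, h2A, h2c, h2e⟩ := key t ht hct
    rw [h1e, h2e]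
    exact hA'mono F1 F2 h1A h2A h1c h2c

end UpperMain
section Compare

/-- `ρ` exponent for the base `r+2`. -/
def rhoc (r : ℕ) : ℕ := Nat.log 2 (r+2) + 1

lemma rhoc_spec (r : ℕ) : r + 2 ≤ 2 ^ (rhoc r) :=
  (Nat.lt_pow_succ_log_self (by norm_num) (r+2)).le

lemma rhoc_pos (r : ℕ) : 1 ≤ rhoc r := by rw [rhoc]; omega

lemma Lfun_step (k : ℕ) (hk : 2 ≤ k) (n : ℕ) :
    Lfun (k+2) n = 2 * Lfun (k+1) (Nat.clog 2 n) + 3*(k+1) + 6 := by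
  obtain ⟨k'', rfl⟩ : ∃ k'', k = k'' + 2 := ⟨k - 2, by omega⟩
  rfl

lemma RkBound_step (k r l : ℕ) (hk : 1 ≤ k) :
    RkBound (k+1) r l = (r+2) ^ ((RkBound k r l + 2) ^ k) := by
  obtain ⟨k'', rfl⟩ : ∃ k'', k = k'' + 1 := ⟨k - 1, by omega⟩
  rfl

lemma keyineq (ρ k s : ℕ) (hρ : 1 ≤ ρ) (hs : 8 ≤ s) :
    ((k + ρ + 10)+1)^3 + (ρ * s + 2) * (k+2) + 1 ≤ (k + ρ + 10)^3 * s := by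
  obtain ⟨s2, rfl⟩ : ∃ s2, s = s2 + 8 := ⟨s - 8, by omega⟩
  nlinarith [sq_nonneg (k+ρ+10), Nat.zero_le (ρ*s2), Nat.zero_le (k*s2)]

lemma comp (r : ℕ) (hr : 1 ≤ r) :
    ∀ k, 2 ≤ k → ∀ a, 1 ≤ a → ∃ n₀, ∀ n, n₀ ≤ n →
      (k + rhoc r + 10)^3
        * (RkBound k r (a * Lfun (k+1) n + a*(k+2)) + 2)^(k+1) ≤ n := by
  intro k hk
  induction k, hk using Nat.le_induction with
  | base =>
    intro a ha
    set ρ := rhoc r with hρ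
    have hρ1 := rhoc_pos r
    set A := 9 * ρ * r * a with hA
    set B' := (2 + ρ + 10)^3 + 42 * ρ * r * a + 6 * ρ + 6 with hB
    refine ⟨2 ^ ((A + B' + 1)^2), fun n hn => ?_⟩
    have hn1 : 1 ≤ n := le_trans Nat.one_le_two_pow hn
    set x := Nat.log 2 n with hx
    have hxbig : (A + B' + 1)^2 ≤ x := by
      have := Nat.log_mono_right (b := 2) hn
      rwa [Nat.log_pow (by norm_num)] at this
    -- the length
    set ℓ := a * Lfun 3 n + a * 4 with hℓ
    have hℓval : ℓ = a * (3 * Nat.sqrt x + 10) + a * 4 := rfl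
    have hE : r * ℓ + 2 ≤ 3*r*a*Nat.sqrt x + 14*r*a + 2 := by
      rw [hℓval]
      have he : r * (a * (3 * Nat.sqrt x + 10) + a * 4) + 2
          = 3*r*a*Nat.sqrt x + 14*r*a + 2 := by ring
      omega
    -- RkBound 2 r ℓ = (r+2)^(r*ℓ+2)
    have hB2 : RkBound 2 r ℓ = (r+2) ^ ((r * ℓ + 2)^1) := rfl
    have hexp : (2 + ρ + 10)^3 + 3 * (ρ * (r*ℓ+2)) + 6 ≤ x := by
      have h1 : A * Nat.sqrt x + B' ≤ x := sqrt_lin hxbig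
      have h2 : ρ * (r*ℓ+2) ≤ ρ * (3*r*a*Nat.sqrt x + 14*r*a + 2) :=
        Nat.mul_le_mul_left _ hE
      have heq : 3 * (ρ * (3*r*a*Nat.sqrt x + 14*r*a + 2))
          = A * Nat.sqrt x + 42*(ρ*r*a) + 6*ρ := by rw [hA]; ring
      have hBeq : B' = (2 + ρ + 10)^3 + 42*(ρ*r*a) + 6*ρ + 6 := by rw [hB]; ring
      linarith
    -- assemble
    have hpow : (2 + ρ + 10)^3 * (RkBound 2 r ℓ + 2)^3 ≤ 2 ^ x := by
      have hBle : RkBound 2 r ℓ ≤ 2 ^ (ρ * (r*ℓ+2)) := by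
        rw [hB2, pow_one]
        calc (r+2) ^ (r*ℓ+2) ≤ (2^ρ) ^ (r*ℓ+2) := Nat.pow_le_pow_left (rhoc_spec r) _
          _ = 2 ^ (ρ * (r*ℓ+2)) := by rw [← pow_mul]
      have h3 : RkBound 2 r ℓ + 2 ≤ 2 ^ (ρ * (r*ℓ+2) + 2) := by
        have h4 : (2:ℕ) ≤ 2 ^ (ρ * (r*ℓ+2) + 1) := by
          calc (2:ℕ) = 2^1 := rfl
            _ ≤ 2 ^ (ρ * (r*ℓ+2) + 1) := Nat.pow_le_pow_right (by norm_num) (by omega)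
        calc RkBound 2 r ℓ + 2 ≤ 2 ^ (ρ * (r*ℓ+2)) + 2 ^ (ρ * (r*ℓ+2) + 1) := by omega
          _ ≤ 2 ^ (ρ * (r*ℓ+2) + 1) + 2 ^ (ρ * (r*ℓ+2) + 1) := by
              have := Nat.pow_le_pow_right (show 1 ≤ 2 by norm_num)
                (show ρ * (r*ℓ+2) ≤ ρ * (r*ℓ+2) + 1 by omega)
              omega
          _ = 2 ^ (ρ * (r*ℓ+2) + 2) := by ring
      calc (2 + ρ + 10)^3 * (RkBound 2 r ℓ + 2)^3
          ≤ 2 ^ ((2 + ρ + 10)^3) * (2 ^ (ρ * (r*ℓ+2) + 2))^3 := by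
            apply Nat.mul_le_mul Nat.lt_two_pow_self.le (Nat.pow_le_pow_left h3 3)
        _ = 2 ^ ((2 + ρ + 10)^3 + (ρ * (r*ℓ+2) + 2) * 3) := by
            rw [← pow_mul, ← pow_add]
        _ ≤ 2 ^ x := by
            apply Nat.pow_le_pow_right (by norm_num)
            linarith [hexp]
    calc (2 + rhoc r + 10)^3 * (RkBound 2 r (a * Lfun (2+1) n + a*(2+2)) + 2)^(2+1)
        = (2 + ρ + 10)^3 * (RkBound 2 r ℓ + 2)^3 := by rw [hρ, hℓ]
      _ ≤ 2 ^ x := hpow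
      _ ≤ n := Nat.pow_log_le_self 2 (by omega)
  | succ k hk2 ihk =>
    intro a ha
    set ρ := rhoc r with hρ
    have hρ1 := rhoc_pos r
    obtain ⟨n₀', hn₀'⟩ := ihk (6*a) (by omega)
    refine ⟨2 ^ (max n₀' 2) + 2, fun n hn => ?_⟩
    have hn2 : 2 ≤ n := by
      have : 2 ≤ 2 ^ (max n₀' 2) := by
        calc (2:ℕ) = 2^1 := rfl
          _ ≤ 2 ^ (max n₀' 2) := Nat.pow_le_pow_right (by norm_num) (by omega)
      omega
    set ν := Nat.clog 2 n with hν
    have hνge : max n₀' 2 ≤ ν := by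
      by_contra hcon
      push_neg at hcon
      have h1 : n ≤ 2 ^ (max n₀' 2 - 1) := by
        have := (Nat.clog_le_iff_le_pow (b := 2) (by norm_num) (x := n) (y := max n₀' 2 - 1)).mp
          (by omega)
        exact this
      have h2 : (2:ℕ) ^ (max n₀' 2 - 1) ≤ 2 ^ (max n₀' 2) :=
        Nat.pow_le_pow_right (by norm_num) (by omega)
      omega
    have hν2 : 2 ≤ ν := le_trans (le_max_right _ _) hνge
    -- unfold Lfun
    set ℓnew := a * Lfun (k+2) n + a*(k+3) with hℓnew
    set ℓ' := (6*a) * Lfun (k+1) ν + (6*a)*(k+2) with hℓ'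
    have hstep := Lfun_step k hk2 n
    have hmonoℓ : ℓnew ≤ ℓ' := by
      rw [hℓnew, hℓ', hstep, ← hν]
      have h0 : 0 ≤ Lfun (k+1) ν := Nat.zero_le _
      nlinarith
    set Bk := RkBound k r ℓ' with hBk
    set s := (Bk + 2)^(k+1) with hs
    have hIH : (k + ρ + 10)^3 * s ≤ ν := hn₀' ν (le_trans (le_max_left _ _) hνge)
    have hs8 : 8 ≤ s := by
      rw [hs]
      calc (8:ℕ) = 2^3 := rfl
        _ ≤ 2 ^ (k+1) := Nat.pow_le_pow_right (by norm_num) (by omega)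
        _ ≤ (Bk+2)^(k+1) := Nat.pow_le_pow_left (by omega) _
    -- bound RkBound (k+1)
    have hBnew : RkBound (k+1) r ℓnew ≤ 2 ^ (ρ * s) := by
      calc RkBound (k+1) r ℓnew ≤ RkBound (k+1) r ℓ' := RkBound_mono _ _ hmonoℓ
        _ = (r+2) ^ ((Bk + 2)^k) := RkBound_step k r ℓ' (by omega)
        _ ≤ (2^ρ) ^ ((Bk + 2)^k) := Nat.pow_le_pow_left (rhoc_spec r) _
        _ = 2 ^ (ρ * (Bk+2)^k) := by rw [← pow_mul]
        _ ≤ 2 ^ (ρ * s) := by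
            apply Nat.pow_le_pow_right (by norm_num)
            apply Nat.mul_le_mul_left
            rw [hs]
            exact Nat.pow_le_pow_right (by omega) (by omega)
    -- key exponent inequality
    set T := k + ρ + 10 with hT
    have hkey : (T+1)^3 + (ρ * s + 2) * (k+2) + 1 ≤ T^3 * s := keyineq ρ k s hρ1 hs8
    -- assemble
    have hfinal : (T+1)^3 * (RkBound (k+1) r ℓnew + 2)^(k+2) ≤ 2 ^ (ν - 1) := by
      have h3 : RkBound (k+1) r ℓnew + 2 ≤ 2 ^ (ρ * s + 2) := by
        have h4 : (2:ℕ) ≤ 2 ^ (ρ * s + 1) := by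
          calc (2:ℕ) = 2^1 := rfl
            _ ≤ 2 ^ (ρ * s + 1) := Nat.pow_le_pow_right (by norm_num) (by omega)
        have h5 : (2:ℕ) ^ (ρ*s) ≤ 2 ^ (ρ*s+1) := Nat.pow_le_pow_right (by norm_num) (by omega)
        calc RkBound (k+1) r ℓnew + 2 ≤ 2 ^ (ρ*s) + 2 ^ (ρ*s+1) := by
              have := hBnew
              omega
          _ ≤ 2 ^ (ρ*s+1) + 2 ^ (ρ*s+1) := by omega
          _ = 2 ^ (ρ*s+2) := by ring
      calc (T+1)^3 * (RkBound (k+1) r ℓnew + 2)^(k+2)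
          ≤ 2 ^ ((T+1)^3) * (2 ^ (ρ*s+2))^(k+2) := by
            apply Nat.mul_le_mul Nat.lt_two_pow_self.le (Nat.pow_le_pow_left h3 _)
        _ = 2 ^ ((T+1)^3 + (ρ*s+2)*(k+2)) := by rw [← pow_mul, ← pow_add]
        _ ≤ 2 ^ (ν - 1) := by
            apply Nat.pow_le_pow_right (by norm_num)
            have h6 : T^3 * s ≤ ν := hIH
            omega
    have hν_n : 2 ^ (ν - 1) < n := Nat.pow_pred_clog_lt_self (by norm_num) (by omega)
    have hU : k + 1 + ρ + 10 = T + 1 := by omega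
    show (k + 1 + ρ + 10)^3 * (RkBound (k+1) r ℓnew + 2)^(k+2) ≤ n
    rw [hU]
    exact le_trans hfinal (le_of_lt hν_n)

lemma comp_final (k r : ℕ) (hk : 1 ≤ k) (hr : 1 ≤ r) :
    ∃ n₀, ∀ N, n₀ ≤ N → RkBound k r (Lfun (k+1) N) ≤ N := by
  rcases Nat.lt_or_ge k 2 with hk2 | hk2
  · -- k = 1
    have hk1 : k = 1 := by omega
    subst hk1
    obtain ⟨n₀, hn₀⟩ := polylog (2*r) 5 1
    refine ⟨n₀, fun N hN => ?_⟩
    have h1 := hn₀ N hN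
    show r * (2 * Nat.log 2 N + 5) ≤ N
    have h2 : r * (2 * Nat.log 2 N + 5) ≤ 2*r * (Nat.log 2 N + 5)^1 := by nlinarith
    omega
  · obtain ⟨n₀, hn₀⟩ := comp r hr k hk2 1 (le_refl 1)
    refine ⟨n₀, fun N hN => ?_⟩
    have h1 := hn₀ N hN
    have h2 : RkBound k r (Lfun (k+1) N) ≤ RkBound k r (1 * Lfun (k+1) N + 1*(k+2)) :=
      RkBound_mono _ _ (by omega)
    have h3 : RkBound k r (1 * Lfun (k+1) N + 1*(k+2)) + 2
        ≤ (RkBound k r (1 * Lfun (k+1) N + 1*(k+2)) + 2)^(k+1) :=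
      Nat.le_self_pow (by omega) _
    have h4 : 1 ≤ (k + rhoc r + 10)^3 := Nat.one_le_pow _ _ (by omega)
    calc RkBound k r (Lfun (k+1) N)
        ≤ RkBound k r (1 * Lfun (k+1) N + 1*(k+2)) + 2 := by omega
      _ ≤ (RkBound k r (1 * Lfun (k+1) N + 1*(k+2)) + 2)^(k+1) := h3
      _ ≤ (k + rhoc r + 10)^3 * (RkBound k r (1 * Lfun (k+1) N + 1*(k+2)) + 2)^(k+1) := by
          nlinarith
      _ ≤ N := h1

end Compare

section Glue

/-- S1 core: monochromatic set for the atomic-type coloring, w.r.t. an arbitrary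
linear order on `Fin N`. -/
lemma S1core {k : ℕ} (hk : 1 ≤ k) (Idx : Type) [Fintype Idx] [DecidableEq Idx]
    (α : Type) [L : LinearOrder α] [Fintype α]
    (tup : Idx → (Fin k → α) → Prop) (ℓ : ℕ)
    (hbound : RkBound k (Fintype.card (Idx → Bool)) ℓ ≤ Fintype.card α) :
    ∃ A : Finset α, ℓ ≤ A.card ∧ ∀ a b : Fin k → α,
      (∀ i j : Fin k, i < j → a i < a j) →
      (∀ i j : Fin k, i < j → b i < b j) →
      (∀ i, a i ∈ A) → (∀ i, b i ∈ A) →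
      ∀ ci : Idx, (tup ci a ↔ tup ci b) := by
  classical
  set χ : Finset α → (Idx → Bool) := fun s =>
    if h : s.card = k then (fun ci => decide (tup ci (fun j => s.orderEmbOfFin h j)))
    else (fun _ => false) with hχdef
  obtain ⟨A, hAcard, hAmono⟩ := upper k hk ℓ α (Idx → Bool) χ hbound
  refine ⟨A, hAcard, ?_⟩
  intro a b ha hb haA hbA ci
  have hamono : StrictMono a := fun i j h => ha i j h
  have hbmono : StrictMono b := fun i j h => hb i j h
  set s := Finset.image a Finset.univ with hsdef
  set t := Finset.image b Finset.univ with htdef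
  have hscard : s.card = k := by
    rw [hsdef, Finset.card_image_of_injective _ hamono.injective, Finset.card_univ,
      Fintype.card_fin]
  have htcard : t.card = k := by
    rw [htdef, Finset.card_image_of_injective _ hbmono.injective, Finset.card_univ,
      Fintype.card_fin]
  have hsA : s ⊆ A := by
    intro z hz
    obtain ⟨i, _, rfl⟩ := Finset.mem_image.mp hz
    exact haA i
  have htA : t ⊆ A := by
    intro z hz
    obtain ⟨i, _, rfl⟩ := Finset.mem_image.mp hz
    exact hbA i
  have henuma : a = ⇑(s.orderEmbOfFin hscard) :=
    Finset.orderEmbOfFin_unique hscard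
      (fun x => Finset.mem_image_of_mem a (Finset.mem_univ x)) hamono
  have henumb : b = ⇑(t.orderEmbOfFin htcard) :=
    Finset.orderEmbOfFin_unique htcard
      (fun x => Finset.mem_image_of_mem b (Finset.mem_univ x)) hbmono
  have hst := hAmono s t hsA htA hscard htcard
  have h1 := congrFun hst ci
  have h2 : χ s ci = decide (tup ci a) := by
    rw [hχdef]
    simp only [dif_pos hscard]
    rw [henuma]
  have h3 : χ t ci = decide (tup ci b) := by
    rw [hχdef]
    simp only [dif_pos htcard]
    rw [henumb]
  rw [h2, h3] at h1
  exact decide_eq_decide.mp h1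

end Glue

end RD

/-- Tower function (not needed in the statement, kept for context). -/
def tow (k n : ℕ) : ℕ := (fun m => 2 ^ m)^[k - 1] n

/-- Lemma (S1)/(S2): for a `k`-ary relational signature there are `f : ℕ → ℕ`
and `n₀` such that on every domain of size `N > n₀` (modelled as `Fin N`):
(S1) every structure and every linear order admit a subset of size `≥ f N` on
which all increasing `k`-tuples have the same atomic type; and
(S2) the `(k+1)`-subsets can be 2-partitioned so that every subset of size
`≥ f N` contains hyperedges of both parts. -/
theorem ramsey_disparity (k : ℕ) (hk : 1 ≤ k)
    (ι : Type) [Fintype ι] (ar : ι → ℕ) (har : ∀ i, ar i ≤ k) :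
    ∃ (f : ℕ → ℕ) (n₀ : ℕ), ∀ N : ℕ, n₀ < N →
      ((∀ (R : ∀ i, (Fin (ar i) → Fin N) → Prop)
          (lt : Fin N → Fin N → Prop), IsStrictTotalOrder (Fin N) lt →
          ∃ A' : Finset (Fin N), f N ≤ A'.card ∧
            ∀ a b : Fin k → Fin N,
              (∀ i j : Fin k, i < j → lt (a i) (a j)) →
              (∀ i j : Fin k, i < j → lt (b i) (b j)) →
              (∀ i, a i ∈ A') → (∀ i, b i ∈ A') →
              ∀ (i : ι) (σ : Fin (ar i) → Fin k),
                ((R i fun j => a (σ j)) ↔ (R i fun j => b (σ j))))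
        ∧
        (∃ B B' : Finset (Finset (Fin N)),
          Disjoint B B' ∧
          B ∪ B' = Finset.powersetCard (k + 1) (Finset.univ : Finset (Fin N)) ∧
          ∀ A' : Finset (Fin N), f N ≤ A'.card →
            (∃ b ∈ B, b ⊆ A') ∧ (∃ b' ∈ B', b' ⊆ A'))) := by
  classical
  set Idx := (Σ i : ι, (Fin (ar i) → Fin k)) with hIdx
  set r := Fintype.card (Idx → Bool) with hr
  have hr1 : 1 ≤ r := Fintype.card_pos
  obtain ⟨n₀, hn₀⟩ := RD.comp_final k r hk hr1
  refine ⟨fun N => RD.Lfun (k+1) N, n₀, fun N hN => ⟨?_, ?_⟩⟩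
  · -- S1
    intro R lt hSTO
    haveI hdec : DecidableRel lt := Classical.decRel lt
    have hbound : RD.RkBound k r (RD.Lfun (k+1) N) ≤ N := hn₀ N (by omega)
    have hbound' : RD.RkBound k r (RD.Lfun (k+1) N) ≤ Fintype.card (Fin N) := by
      rw [Fintype.card_fin]
      exact hbound
    obtain ⟨A, hAcard, hAiff⟩ := RD.S1core hk Idx (Fin N) (L := linearOrderOfSTO lt)
      (fun ci g => R ci.1 (fun j => g (ci.2 j)))
      (RD.Lfun (k+1) N) hbound' 
    refine ⟨A, hAcard, ?_⟩
    intro a b ha hb haA hbA i σ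
    exact hAiff a b ha hb haA hbA ⟨i, σ⟩
  · -- S2
    obtain ⟨χ', hχ'⟩ := RD.low (k+1) (by omega) N
    refine ⟨(Finset.powersetCard (k+1) Finset.univ).filter (fun s => χ' s = true),
            (Finset.powersetCard (k+1) Finset.univ).filter (fun s => ¬ (χ' s = true)),
            Finset.disjoint_filter_filter_not _ _ _,
            Finset.filter_union_filter_not_eq _ _, ?_⟩
    intro A' hA'
    have hA'' : RD.Lfun (k+1) N ≤ A'.card := hA'
    have hnm : ¬ RD.MonoOn (k+1) χ' A' := by
      intro hmono
      have := hχ' A' hmono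
      omega
    rw [RD.MonoOn] at hnm
    push_neg at hnm
    obtain ⟨s, t, hs, ht, hcs, hct, hne⟩ := hnm
    have hsmem : s ∈ Finset.powersetCard (k+1) (Finset.univ : Finset (Fin N)) :=
      Finset.mem_powersetCard.mpr ⟨Finset.subset_univ s, hcs⟩
    have htmem : t ∈ Finset.powersetCard (k+1) (Finset.univ : Finset (Fin N)) :=
      Finset.mem_powersetCard.mpr ⟨Finset.subset_univ t, hct⟩
    rcases Bool.eq_false_or_eq_true (χ' s) with h | h
    · -- χ' s = true
      have ht' : χ' t = false := by
        rcases Bool.eq_false_or_eq_true (χ' t) with h' | h'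
        · exact absurd (h.trans h'.symm) hne
        · exact h'
      constructor
      · exact ⟨s, Finset.mem_filter.mpr ⟨hsmem, h⟩, hs⟩
      · exact ⟨t, Finset.mem_filter.mpr ⟨htmem, by simp [ht']⟩, ht⟩
    · -- χ' s = false
      have ht' : χ' t = true := by
        rcases Bool.eq_false_or_eq_true (χ' t) with h' | h'
        · exact h'
        · exact absurd (h.trans h'.symm) hne
      constructor
      · exact ⟨t, Finset.mem_filter.mpr ⟨htmem, ht'⟩, ht⟩
      · exact ⟨s, Finset.mem_filter.mpr ⟨hsmem, by simp [h]⟩, hs⟩
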